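/- arXiv:1405.1126 — 4 statements merged into one kernel-verified Lean document; each statement's English description precedes it below -/
import Mathlib

section
/- Let D > 0 and r > 0, and define Δ(λ, c) = D(e^λ + e^{−λ} − 2) − cλ + r and c₂ = inf_{λ>0} [D(e^λ + e^{−λ} − 2) + r]/λ. Then c₂ > 0, and for every c > c₂ the equation Δ(λ, c) = 0 has exactly two distinct positive real roots λ₁(c) < λ₂(c), and moreover Δ(λ, c) < 0 for all λ ∈ (λ₁(c), λ₂(c)), while Δ(λ, c) > 0 for all λ ∈ (0, λ₁(c)) and all λ > λ₂(c). -/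
open Real Filter

/-- The critical speed `c₂ = inf_{λ>0} [D(e^λ + e^{−λ} − 2) + r]/λ`. -/
noncomputable def critSpeed (D r : ℝ) : ℝ :=
  sInf {y : ℝ | ∃ l : ℝ, 0 < l ∧ y = (D * (Real.exp l + Real.exp (-l) - 2) + r) / l}

private lemma sq_le_E (l : ℝ) (hl : 0 ≤ l) :
    l ^ 2 ≤ Real.exp l + Real.exp (-l) - 2 := by
  have hs : l / 2 ≤ Real.sinh (l / 2) := Real.self_le_sinh_iff.2 (by linarith)
  have h1 : Real.sinh (l / 2) = (Real.exp (l / 2) - Real.exp (-(l / 2))) / 2 := Real.sinh_eq _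
  have h2 : Real.exp (l / 2) * Real.exp (-(l / 2)) = 1 := by
    rw [← Real.exp_add]; simp
  have h3 : Real.exp (l / 2) * Real.exp (l / 2) = Real.exp l := by
    rw [← Real.exp_add]; ring_nf
  have h4 : Real.exp (-(l / 2)) * Real.exp (-(l / 2)) = Real.exp (-l) := by
    rw [← Real.exp_add]; ring_nf
  have hl2 : l ≤ Real.exp (l / 2) - Real.exp (-(l / 2)) := by
    rw [h1] at hs; linarith
  nlinarith [mul_le_mul hl2 hl2 hl (by linarith), h2, h3, h4]

private lemma exp_strict (x y z : ℝ) (hxy : x < y) (hyz : y < z) :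
    (z - x) * Real.exp y < (z - y) * Real.exp x + (y - x) * Real.exp z := by
  have h1 : (x - y) + 1 < Real.exp (x - y) := Real.add_one_lt_exp (by linarith)
  have h2 : (z - y) + 1 < Real.exp (z - y) := Real.add_one_lt_exp (by linarith)
  have e1 : Real.exp (x - y) * Real.exp y = Real.exp x := by rw [← Real.exp_add]; ring_nf
  have e2 : Real.exp (z - y) * Real.exp y = Real.exp z := by rw [← Real.exp_add]; ring_nf
  have hy := Real.exp_pos y
  nlinarith [mul_lt_mul_of_pos_right (mul_lt_mul_of_pos_left h1 (by linarith : (0:ℝ) < z - y)) hy,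
    mul_lt_mul_of_pos_right (mul_lt_mul_of_pos_left h2 (by linarith : (0:ℝ) < y - x)) hy]

private lemma key_convex (D c r x y z : ℝ) (hD : 0 < D) (hxy : x < y) (hyz : y < z) :
    (z - x) * (D * (Real.exp y + Real.exp (-y) - 2) - c * y + r) <
      (z - y) * (D * (Real.exp x + Real.exp (-x) - 2) - c * x + r) +
        (y - x) * (D * (Real.exp z + Real.exp (-z) - 2) - c * z + r) := by
  have h1 := exp_strict x y z hxy hyz
  have h2 := exp_strict (-z) (-y) (-x) (by linarith) (by linarith)
  have hS : (z - x) * (Real.exp y + Real.exp (-y)) <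
      (z - y) * (Real.exp x + Real.exp (-x)) + (y - x) * (Real.exp z + Real.exp (-z)) := by
    nlinarith [h1, h2]
  nlinarith [mul_lt_mul_of_pos_left hS hD]

theorem stmt0 (D r : ℝ) (hD : 0 < D) (hr : 0 < r) :
    0 < critSpeed D r ∧
    ∀ c : ℝ, critSpeed D r < c →
      ∃ l1 l2 : ℝ, 0 < l1 ∧ l1 < l2 ∧
        D * (exp l1 + exp (-l1) - 2) - c * l1 + r = 0 ∧
        D * (exp l2 + exp (-l2) - 2) - c * l2 + r = 0 ∧
        (∀ l : ℝ, l1 < l → l < l2 → D * (exp l + exp (-l) - 2) - c * l + r < 0) ∧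
        (∀ l : ℝ, 0 < l → l < l1 → 0 < D * (exp l + exp (-l) - 2) - c * l + r) ∧
        (∀ l : ℝ, l2 < l → 0 < D * (exp l + exp (-l) - 2) - c * l + r) := by
  set S : Set ℝ :=
    {y : ℝ | ∃ l : ℝ, 0 < l ∧ y = (D * (Real.exp l + Real.exp (-l) - 2) + r) / l} with hS
  have hne : S.Nonempty := ⟨(D * (Real.exp 1 + Real.exp (-1) - 2) + r) / 1, 1, one_pos, rfl⟩
  have hlb : ∀ y ∈ S, min r D ≤ y := by
    rintro y ⟨l, hl, rfl⟩
    have hE := sq_le_E l hl.le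
    rw [le_div_iff₀ hl]
    rcases le_or_gt l 1 with h1 | h1
    · have : min r D ≤ r := min_le_left _ _
      nlinarith [sq_nonneg l]
    · have : min r D ≤ D := min_le_right _ _
      nlinarith [mul_le_mul_of_nonneg_right this hl.le,
        mul_le_mul_of_nonneg_left hE hD.le,
        mul_nonneg (mul_pos hD hl).le (by linarith : (0:ℝ) ≤ l - 1)]
  constructor
  · have : min r D ≤ critSpeed D r := le_csInf hne hlb
    have h0 : 0 < min r D := lt_min hr hD
    calc (0:ℝ) < min r D := h0
      _ ≤ critSpeed D r := this
  · intro c hc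
    obtain ⟨y, hy, hyc⟩ := exists_lt_of_csInf_lt hne hc
    obtain ⟨l0, hl0, rfl⟩ := hy
    set f : ℝ → ℝ := fun l => D * (Real.exp l + Real.exp (-l) - 2) - c * l + r with hf
    have hfl0 : f l0 < 0 := by
      have := (div_lt_iff₀ hl0).1 hyc
      simp only [hf]; nlinarith
    have hf0 : f 0 = r := by
      show D * (Real.exp 0 + Real.exp (-0) - 2) - c * 0 + r = r
      rw [neg_zero, Real.exp_zero]; ring
    set L : ℝ := max (l0 + 1) (c / D + 1) with hL
    have hLl0 : l0 + 1 ≤ L := le_max_left _ _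
    have hLc : c / D + 1 ≤ L := le_max_right _ _
    have hLpos : 0 < L := by linarith
    have hDL : c + D ≤ D * L := by
      have : D * (c / D + 1) ≤ D * L := mul_le_mul_of_nonneg_left hLc hD.le
      have hcd : D * (c / D) = c := by field_simp
      nlinarith
    have hfL : 0 < f L := by
      have hE := sq_le_E L hLpos.le
      simp only [hf]
      nlinarith
    have hcont : Continuous f := by
      simp only [hf]; fun_prop
    -- first root in (0, l0)
    have h1 : (0:ℝ) ∈ Set.Ioo (f l0) (f 0) := ⟨hfl0, by rw [hf0]; exact hr⟩
    obtain ⟨l1, hl1mem, hl1⟩ :=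
      intermediate_value_Ioo' hl0.le hcont.continuousOn h1
    -- second root in (l0, L)
    have h2 : (0:ℝ) ∈ Set.Ioo (f l0) (f L) := ⟨hfl0, hfL⟩
    obtain ⟨l2, hl2mem, hl2⟩ :=
      intermediate_value_Ioo (by linarith : l0 ≤ L) hcont.continuousOn h2
    obtain ⟨hl1pos, hl1lt⟩ := hl1mem
    obtain ⟨hl2gt, hl2lt⟩ := hl2mem
    have key : ∀ x y z : ℝ, x < y → y < z → (z - x) * f y < (z - y) * f x + (y - x) * f z :=
      fun x y z h h' => key_convex D c r x y z hD h h'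
    refine ⟨l1, l2, hl1pos, by linarith, hl1, hl2, ?_, ?_, ?_⟩
    · intro l h1l h2l
      have hk := key l1 l l2 h1l h2l
      rw [hl1, hl2] at hk
      have hpos : (0:ℝ) < l2 - l1 := by linarith
      show f l < 0
      nlinarith [hk, hpos]
    · intro l hlpos hll1
      have hk := key l l1 l0 hll1 hl1lt
      rw [hl1] at hk
      have hp1 : (0:ℝ) < l0 - l1 := by linarith
      have hp2 : (0:ℝ) < l1 - l := by linarith
      show 0 < f l
      nlinarith [hk, mul_neg_of_pos_of_neg hp2 hfl0]
    · intro l hl2l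
      have hk := key l0 l2 l hl2gt hl2l
      rw [hl2] at hk
      have hp1 : (0:ℝ) < l2 - l0 := by linarith
      have hp2 : (0:ℝ) < l - l2 := by linarith
      show 0 < f l
      nlinarith [hk, mul_neg_of_pos_of_neg hp2 hfl0]
end

section
/- Let D > 0, M > 0, and f(u) = u·h(u) where h : ℝ → ℝ is Lipschitz continuous, nonincreasing on [0, M], and h(M) = 0. Suppose w, v : ℤ × [0, ∞) → ℝ are differentiable in t, take values in [0, M], and satisfy for all n ∈ ℤ and t > 0 the differential inequalities dw_n(t)/dt ≥ D(w_{n+1}(t) − 2w_n(t) + w_{n−1}(t)) + f(w_n(t)) and dv_n(t)/dt ≤ D(v_{n+1}(t) − 2v_n(t) + v_{n−1}(t)) + f(v_n(t)). If w_n(0) ≥ v_n(0) for all n ∈ ℤ, then w_n(t) ≥ v_n(t) for all n ∈ ℤ and t > 0. -/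
open Real Filter

/-- If `φ` has derivative `d` at `b` and attains a maximum over `[a,b]` at `b` (with `a < b`),
then `d ≥ 0`. -/
lemma aux_deriv_nonneg_of_max {φ : ℝ → ℝ} {a b d : ℝ} (hab : a < b)
    (hd : HasDerivAt φ d b) (hmax : ∀ t, a ≤ t → t ≤ b → φ t ≤ φ b) : 0 ≤ d := by
  have hd' : HasDerivWithinAt φ d (Set.Iio b) b := hd.hasDerivWithinAt
  have hslope : Tendsto (slope φ b) (nhdsWithin b (Set.Iio b)) (nhds d) := by
    have := hasDerivWithinAt_iff_tendsto_slope.1 hd'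
    simpa [Set.diff_singleton_eq_self (Set.notMem_Iio.2 le_rfl)] using this
  have hne : (nhdsWithin b (Set.Iio b)).NeBot := by infer_instance
  refine ge_of_tendsto hslope ?_
  have hmem : Set.Ioo a b ∈ nhdsWithin b (Set.Iio b) := by
    rw [mem_nhdsWithin]
    exact ⟨Set.Ioi a, isOpen_Ioi, hab, by intro x hx; exact ⟨hx.1, hx.2⟩⟩
  filter_upwards [hmem] with t ht
  have h1 : φ t - φ b ≤ 0 := sub_nonpos.2 (hmax t ht.1.le ht.2.le)
  have h2 : t - b ≤ 0 := by have := ht.2; linarith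
  rw [slope_def_field]
  exact div_nonneg_of_nonpos h1 h2

set_option maxHeartbeats 1000000 in
/-- Comparison principle for the undelayed lattice equation
`du_n/dt = D(u_{n+1} − 2u_n + u_{n−1}) + f(u_n)` with `f(u) = u·h(u)`:
an upper solution `w` dominates a lower solution `v` if it does so initially. -/
theorem stmt3 (D M : ℝ) (hD : 0 < D) (hM : 0 < M)
    (h : ℝ → ℝ) (L : NNReal) (hLip : LipschitzWith L h)
    (hanti : AntitoneOn h (Set.Icc 0 M)) (hMzero : h M = 0)
    (f : ℝ → ℝ) (hf : ∀ u, f u = u * h u)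
    (w v : ℤ → ℝ → ℝ)
    (hwcont : ∀ n : ℤ, ContinuousOn (w n) (Set.Ici 0))
    (hvcont : ∀ n : ℤ, ContinuousOn (v n) (Set.Ici 0))
    (hwrange : ∀ (n : ℤ) (t : ℝ), 0 ≤ t → w n t ∈ Set.Icc 0 M)
    (hvrange : ∀ (n : ℤ) (t : ℝ), 0 ≤ t → v n t ∈ Set.Icc 0 M)
    (hupper : ∀ (n : ℤ) (t : ℝ), 0 < t → ∃ w' : ℝ, HasDerivAt (w n) w' t ∧
      D * (w (n+1) t - 2 * w n t + w (n-1) t) + f (w n t) ≤ w')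
    (hlower : ∀ (n : ℤ) (t : ℝ), 0 < t → ∃ v' : ℝ, HasDerivAt (v n) v' t ∧
      v' ≤ D * (v (n+1) t - 2 * v n t + v (n-1) t) + f (v n t))
    (hinit : ∀ n : ℤ, v n 0 ≤ w n 0) :
    ∀ (n : ℤ) (t : ℝ), 0 < t → v n t ≤ w n t := by
  set C : ℝ := (L : ℝ) * M + 2 * D + 1 with hCdef
  have hL0 : (0:ℝ) ≤ (L : ℝ) := L.coe_nonneg
  have hC0 : 0 ≤ C := by positivity
  -- Lipschitz-type one-sided bound on f
  have hfb : ∀ a b : ℝ, 0 ≤ b → b ≤ a → a ≤ M → f a - f b ≤ (L : ℝ) * M * (a - b) := by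
    intro a b hb0 hba haM
    have hbM : b ≤ M := le_trans hba haM
    have ha0 : 0 ≤ a := le_trans hb0 hba
    have hmono : h a ≤ h b := hanti ⟨hb0, hbM⟩ ⟨ha0, haM⟩ hba
    have hhb : h b ≤ (L : ℝ) * M := by
      have := hLip.dist_le_mul b M
      rw [Real.dist_eq, Real.dist_eq, hMzero, sub_zero] at this
      have h1 : h b ≤ |h b| := le_abs_self _
      have h2 : |b - M| ≤ M := by rw [abs_of_nonpos (by linarith)]; linarith
      nlinarith
    rw [hf, hf]
    nlinarith [mul_le_mul_of_nonneg_left hmono ha0,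
      mul_le_mul_of_nonneg_left hhb (sub_nonneg.2 hba)]
  -- the key barrier estimate
  have key : ∀ ε : ℝ, 0 < ε → ∀ n : ℤ, ∀ t : ℝ, 0 ≤ t →
      v n t - w n t ≤ ε * Real.exp (C * t) * (1 + (n : ℝ) ^ 2) := by
    intro ε hε
    by_contra hcon
    push_neg at hcon
    obtain ⟨n₁, t₁, ht₁, hbad⟩ := hcon
    set g : ℤ → ℝ → ℝ :=
      fun n t => v n t - w n t - ε * Real.exp (C * t) * (1 + (n : ℝ) ^ 2) with hgdef
    have gcont : ∀ n : ℤ, ContinuousOn (g n) (Set.Ici 0) := by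
      intro n
      exact ((hvcont n).sub (hwcont n)).sub
        (Continuous.continuousOn (by continuity))
    have gneg0 : ∀ n : ℤ, g n 0 < 0 := by
      intro n
      have h1 := hinit n
      have h2 : (0:ℝ) ≤ (n : ℝ) ^ 2 := sq_nonneg _
      simp only [hgdef, mul_zero, Real.exp_zero]
      nlinarith
    -- indices where g can be nonnegative are bounded
    have hEge : ∀ t : ℝ, 0 ≤ t → (1:ℝ) ≤ Real.exp (C * t) := by
      intro t ht
      rw [← Real.exp_zero]
      exact Real.exp_le_exp.2 (by positivity)
    have bound_n : ∀ n : ℤ, ∀ t : ℝ, 0 ≤ t → 0 ≤ g n t → ((n : ℝ)) ^ 2 ≤ M / ε := by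
      intro n t ht hg
      have h1 : ε * Real.exp (C * t) * (1 + (n : ℝ) ^ 2) ≤ v n t - w n t := by
        simp only [hgdef] at hg; linarith
      have h2 : v n t ≤ M := (hvrange n t ht).2
      have h3 : 0 ≤ w n t := (hwrange n t ht).1
      have h4 := hEge t ht
      have h5 : ε * (1 + (n : ℝ) ^ 2) ≤ ε * Real.exp (C * t) * (1 + (n : ℝ) ^ 2) := by
        have hp : (0:ℝ) ≤ 1 + (n:ℝ)^2 := by positivity
        nlinarith [mul_nonneg (mul_nonneg hε.le hp) (sub_nonneg.2 h4)]
      rw [le_div_iff₀ hε]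
      nlinarith [sq_nonneg ((n:ℝ))]
    set N : ℤ := ⌈M / ε⌉ with hNdef
    have hNmem : ∀ n : ℤ, ∀ t : ℝ, 0 ≤ t → 0 ≤ g n t → n ∈ Finset.Icc (-N) N := by
      intro n t ht hg
      have h1 := bound_n n t ht hg
      have h2 : |(n : ℝ)| ≤ M / ε := by
        rcases eq_or_ne n 0 with rfl | hn
        · simp; positivity
        · have : (1:ℝ) ≤ |(n:ℝ)| := by
            rw [← Int.cast_abs]; exact_mod_cast Int.one_le_abs hn
          nlinarith [abs_nonneg ((n:ℝ)), sq_abs ((n:ℝ))]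
      have h3 : |(n : ℝ)| ≤ (N : ℝ) := le_trans h2 (Int.le_ceil _)
      rw [← Int.cast_abs] at h3
      have h4 : |n| ≤ N := by exact_mod_cast h3
      rw [Finset.mem_Icc]
      exact ⟨neg_le_of_abs_le h4, le_of_abs_le h4⟩
    -- the set of "bad" times
    set S : Set ℝ := ⋃ n ∈ Finset.Icc (-N) N,
      (Set.Icc 0 t₁ ∩ (g n) ⁻¹' Set.Ici 0) with hSdef
    have hSclosed : IsClosed S := by
      refine Set.Finite.isClosed_biUnion (Finset.finite_toSet _) ?_
      intro n _
      exact ContinuousOn.preimage_isClosed_of_isClosed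
        ((gcont n).mono (fun x hx => hx.1)) isClosed_Icc isClosed_Ici
    have ht₁S : t₁ ∈ S := by
      have hg₁ : 0 ≤ g n₁ t₁ := by simp only [hgdef]; linarith
      refine Set.mem_biUnion ?_ ⟨⟨ht₁, le_refl _⟩, hg₁⟩
      exact hNmem n₁ t₁ ht₁ hg₁
    have hSbdd : BddBelow S := ⟨0, by
      rintro x hx
      simp only [hSdef, Set.mem_iUnion] at hx
      obtain ⟨n, _, hx1, _⟩ := hx
      exact hx1.1⟩
    set t₀ : ℝ := sInf S with ht₀def
    have ht₀S : t₀ ∈ S := hSclosed.csInf_mem ⟨t₁, ht₁S⟩ hSbdd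
    obtain ⟨n₀, hn₀F, ht₀mem, hg₀⟩ : ∃ n₀ : ℤ, n₀ ∈ Finset.Icc (-N) N ∧
        t₀ ∈ Set.Icc 0 t₁ ∧ 0 ≤ g n₀ t₀ := by
      simp only [hSdef, Set.mem_iUnion] at ht₀S
      obtain ⟨n, hn, h1, h2⟩ := ht₀S
      exact ⟨n, hn, h1, h2⟩
    have ht₀pos : 0 < t₀ := by
      rcases lt_or_eq_of_le ht₀mem.1 with hlt | heq
      · exact hlt
      · exact absurd hg₀ (by rw [← heq]; exact not_le.2 (gneg0 n₀))
    -- g is negative strictly before t₀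
    have hbefore : ∀ n : ℤ, ∀ t : ℝ, 0 ≤ t → t < t₀ → g n t < 0 := by
      intro n t ht htlt
      by_contra hc
      push_neg at hc
      have htmem : t ∈ S := by
        refine Set.mem_biUnion (hNmem n t ht hc) ⟨⟨ht, ?_⟩, hc⟩
        exact le_trans htlt.le ht₀mem.2
      exact absurd (csInf_le hSbdd htmem) (not_le.2 htlt)
    -- g is nonpositive at t₀ (by continuity from the left)
    have hat : ∀ n : ℤ, g n t₀ ≤ 0 := by
      intro n
      have hcAt : ContinuousAt (g n) t₀ :=
        (gcont n).continuousAt (Ici_mem_nhds ht₀pos)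
      have htend : Tendsto (g n) (nhdsWithin t₀ (Set.Iio t₀)) (nhds (g n t₀)) :=
        hcAt.continuousWithinAt.tendsto
      refine le_of_tendsto htend ?_
      have hmem : Set.Ioo 0 t₀ ∈ nhdsWithin t₀ (Set.Iio t₀) := by
        rw [mem_nhdsWithin]
        exact ⟨Set.Ioi 0, isOpen_Ioi, ht₀pos, fun x hx => ⟨hx.1, hx.2⟩⟩
      filter_upwards [hmem] with t ht
      exact (hbefore n t ht.1.le ht.2).le
    have hg₀eq : g n₀ t₀ = 0 := le_antisymm (hat n₀) hg₀
    -- derivatives at t₀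
    obtain ⟨w', hw', hwineq⟩ := hupper n₀ t₀ ht₀pos
    obtain ⟨v', hv', hvineq⟩ := hlower n₀ t₀ ht₀pos
    have hβ : HasDerivAt (fun t => ε * Real.exp (C * t) * (1 + (n₀ : ℝ) ^ 2))
        (ε * (Real.exp (C * t₀) * C) * (1 + (n₀ : ℝ) ^ 2)) t₀ := by
      have h1 : HasDerivAt (fun t : ℝ => C * t) C t₀ := by
        simpa using (hasDerivAt_id t₀).const_mul C
      exact ((h1.exp).const_mul ε).mul_const _
    have hgd : HasDerivAt (g n₀)
        (v' - w' - ε * (Real.exp (C * t₀) * C) * (1 + (n₀ : ℝ) ^ 2)) t₀ :=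
      (hv'.sub hw').sub hβ
    have hd0 : 0 ≤ v' - w' - ε * (Real.exp (C * t₀) * C) * (1 + (n₀ : ℝ) ^ 2) := by
      refine aux_deriv_nonneg_of_max ht₀pos hgd ?_
      intro t ht0 htle
      rw [hg₀eq]
      rcases lt_or_eq_of_le htle with hlt | heq
      · exact (hbefore n₀ t ht0 hlt).le
      · rw [heq, hg₀eq]
    -- assemble the contradiction
    set E : ℝ := Real.exp (C * t₀) with hEdef
    have hE1 : (1:ℝ) ≤ E := hEge t₀ ht₀pos.le
    have hE0 : 0 < E := Real.exp_pos _
    set x : ℝ := (n₀ : ℝ) with hxdef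
    have hab : v n₀ t₀ - w n₀ t₀ = ε * E * (1 + x ^ 2) := by
      have := hg₀eq
      simp only [hgdef] at this
      linarith
    have hnb1 : v (n₀ + 1) t₀ - w (n₀ + 1) t₀ ≤ ε * E * (1 + (x + 1) ^ 2) := by
      have := hat (n₀ + 1)
      simp only [hgdef] at this
      push_cast at this
      linarith
    have hnb2 : v (n₀ - 1) t₀ - w (n₀ - 1) t₀ ≤ ε * E * (1 + (x - 1) ^ 2) := by
      have := hat (n₀ - 1)
      simp only [hgdef] at this
      push_cast at this
      linarith
    have hp : (0:ℝ) ≤ 1 + x ^ 2 := by positivity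
    have hεE : 0 < ε * E := mul_pos hε hE0
    have hfdiff : f (v n₀ t₀) - f (w n₀ t₀) ≤ (L : ℝ) * M * (v n₀ t₀ - w n₀ t₀) := by
      refine hfb _ _ (hwrange n₀ t₀ ht₀pos.le).1 ?_ (hvrange n₀ t₀ ht₀pos.le).2
      linarith [hab, mul_nonneg hεE.le hp]
    have h1 : D * (v (n₀+1) t₀ - w (n₀+1) t₀) ≤ D * (ε * E * (1 + (x+1)^2)) :=
      mul_le_mul_of_nonneg_left hnb1 hD.le
    have h2 : D * (v (n₀-1) t₀ - w (n₀-1) t₀) ≤ D * (ε * E * (1 + (x-1)^2)) :=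
      mul_le_mul_of_nonneg_left hnb2 hD.le
    have hfinal : v' - w' ≤ D * (v (n₀+1) t₀ - w (n₀+1) t₀)
        + D * (v (n₀-1) t₀ - w (n₀-1) t₀) - 2 * D * (v n₀ t₀ - w n₀ t₀)
        + (f (v n₀ t₀) - f (w n₀ t₀)) := by linarith [hvineq, hwineq]
    have e2 : 2 * D * (v n₀ t₀ - w n₀ t₀) = 2 * D * (ε * E * (1 + x ^ 2)) := by rw [hab]
    have e3 : (L:ℝ) * M * (v n₀ t₀ - w n₀ t₀) = (L:ℝ) * M * (ε * E * (1 + x ^ 2)) := by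
      rw [hab]
    have hmid : v' - w' ≤ 2 * D * (ε * E) + (L:ℝ) * M * (ε * E) * (1 + x ^ 2) := by
      have e1 : D * (ε * E * (1 + (x+1)^2)) + D * (ε * E * (1 + (x-1)^2))
          - 2 * D * (ε * E * (1 + x^2)) = 2 * D * (ε * E) := by ring
      linarith [hfinal, h1, h2, hfdiff, e2, e3, e1]
    rw [hCdef] at hd0
    have h6 : 0 ≤ D * (ε * E) * x ^ 2 :=
      mul_nonneg (mul_nonneg hD.le hεE.le) (sq_nonneg x)
    have h7 : 0 ≤ ε * E * x ^ 2 := mul_nonneg hεE.le (sq_nonneg x)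
    linarith [hd0, hmid, hεE, h6, h7]
  -- conclude by letting ε → 0
  intro n t ht
  by_contra hc
  push_neg at hc
  have hcpos : 0 < Real.exp (C * t) * (1 + (n : ℝ) ^ 2) := by positivity
  set c : ℝ := Real.exp (C * t) * (1 + (n : ℝ) ^ 2) with hcdef
  have hkey := key ((v n t - w n t) / (2 * c))
    (div_pos (by linarith) (by linarith)) n t ht.le
  have heq : (v n t - w n t) / (2 * c) * Real.exp (C * t) * (1 + (n : ℝ) ^ 2)
      = (v n t - w n t) / 2 := by
    rw [mul_assoc, ← hcdef]
    field_simp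
  rw [heq] at hkey
  linarith
end

section
/- Let D > 0, τ ≥ 0, and let g : ℝ² → ℝ satisfy (H1), (H2), (H3). Define c* = inf_{λ>0} [D(e^λ + e^{−λ} − 2) + g(0,0)]/λ. If 0 < c < c*, then there is no C¹ function φ : ℝ → ℝ with 0 < φ(ξ) ≤ 1 for all ξ satisfying the wave profile equation c·φ'(ξ) = D(φ(ξ+1) + φ(ξ−1) − 2φ(ξ)) + φ(ξ)·g(φ(ξ), φ(ξ − cτ)) for all ξ ∈ ℝ together with lim_{ξ→−∞} φ(ξ) = 0 and 0 < liminf_{ξ→∞} φ(ξ) ≤ limsup_{ξ→∞} φ(ξ) ≤ 1. -/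
open Real Filter
open Topology

/-- (H1): `g(1,0) = 0` and `g(u,0) > 0` for `u ∈ (0,1)`. -/
def HypH1 (g : ℝ → ℝ → ℝ) : Prop :=
  g 1 0 = 0 ∧ ∀ u ∈ Set.Ioo (0:ℝ) 1, 0 < g u 0

/-- (H2): `g` is Lipschitz continuous and strictly decreasing in each argument on
`[0,1]×[0,1]`, and `g(u,0) → −∞` as `u → ∞`. -/
def HypH2 (g : ℝ → ℝ → ℝ) : Prop :=
  (∃ L : NNReal, LipschitzWith L (fun p : ℝ × ℝ => g p.1 p.2)) ∧
  (∀ v ∈ Set.Icc (0:ℝ) 1, StrictAntiOn (fun u => g u v) (Set.Icc 0 1)) ∧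
  (∀ u ∈ Set.Icc (0:ℝ) 1, StrictAntiOn (fun v => g u v) (Set.Icc 0 1)) ∧
  Filter.Tendsto (fun u => g u 0) Filter.atTop Filter.atBot

/-- (H3): `g(0,1) > 0` and there is `E ∈ (0,1)` with `g(E,E) = 0`. -/
def HypH3 (g : ℝ → ℝ → ℝ) : Prop :=
  0 < g 0 1 ∧ ∃ E ∈ Set.Ioo (0:ℝ) 1, g E E = 0

/-- (H4): if `1 > ū ≥ u̲ > 0` with `g(u̲,ū) ≤ 0` and `g(ū,u̲) ≥ 0`, then `u̲ = ū = E`. -/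
def HypH4 (g : ℝ → ℝ → ℝ) (E : ℝ) : Prop :=
  ∀ ubar lbar : ℝ, ubar < 1 → lbar ≤ ubar → 0 < lbar →
    g lbar ubar ≤ 0 → 0 ≤ g ubar lbar → lbar = E ∧ ubar = E

/-- A bounded mild solution of the delayed lattice differential equation
`du_n/dt = D(u_{n+1} − 2u_n + u_{n−1}) + u_n g(u_n(t), u_n(t−τ))` with initial data `φ`
on `[−τ,0]`, written via the variation-of-constants formula with auxiliary constant `d`. -/
def MildSolution (D τ d : ℝ) (g : ℝ → ℝ → ℝ) (φ u : ℤ → ℝ → ℝ) : Prop :=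
  (∃ C : ℝ, ∀ (n : ℤ) (t : ℝ), -τ ≤ t → |u n t| ≤ C) ∧
  (∀ n : ℤ, ContinuousOn (u n) (Set.Ici (-τ))) ∧
  (∀ (n : ℤ) (s : ℝ), s ∈ Set.Icc (-τ) 0 → u n s = φ n s) ∧
  (∀ (n : ℤ) (t : ℝ), 0 < t →
    u n t = Real.exp (-(2*D+d)*t) * φ n 0 +
      ∫ s in (0:ℝ)..t, Real.exp (-(2*D+d)*(t-s)) *
        (d * u n s + D * (u (n+1) s + u (n-1) s) + u n s * g (u n s) (u n (s - τ))))

set_option maxHeartbeats 1000000 in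
lemma aux_root (D c γ : ℝ) (hD : 0 < D) (hc0 : 0 < c)
    (hPγ : 0 < D*(Real.exp (Real.arsinh (c/(2*D))) + Real.exp (-Real.arsinh (c/(2*D))) - 2)
            - c*Real.arsinh (c/(2*D)) + γ) :
    ∃ σ μ : ℝ, 0 < σ ∧ σ < π ∧ D*(Real.exp μ - Real.exp (-μ)) * Real.sin σ = c*σ ∧
      D*(Real.exp μ + Real.exp (-μ))*Real.cos σ - 2*D - c*μ + γ = 0 := by
  set μ0 := Real.arsinh (c/(2*D)) with hμ0def
  set m : ℝ → ℝ := fun σ => Real.arsinh (c*σ/(2*D*Real.sin σ)) with hmdef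
  set Φ : ℝ → ℝ := fun σ => 2*D*Real.cosh (m σ)*Real.cos σ - 2*D - c*(m σ) + γ with hΦdef
  have hπ3 := Real.pi_gt_three
  set η := min (1/2) (c/(|γ|+1)) with hηdef
  have hγab : (0:ℝ) < |γ|+1 := by positivity
  have hη0 : 0 < η := lt_min (by norm_num) (div_pos hc0 hγab)
  have hηhalf : η ≤ 1/2 := min_le_left _ _
  set σ2 := π - η with hσ2def
  have hσ2a : 2 < σ2 := by rw [hσ2def]; linarith
  have hσ2pi : σ2 < π := by rw [hσ2def]; linarith
  have hsinσ2 : Real.sin σ2 = Real.sin η := Real.sin_pi_sub η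
  have hcosσ2 : Real.cos σ2 = -Real.cos η := Real.cos_pi_sub η
  have hsinη_pos : 0 < Real.sin η := Real.sin_pos_of_pos_of_lt_pi hη0 (by linarith)
  have hsinη_le : Real.sin η ≤ η := Real.sin_le hη0.le
  have hcosη : 1/2 ≤ Real.cos η := by
    have h := Real.cos_le_cos_of_nonneg_of_le_pi hη0.le (by linarith : π/3 ≤ π)
      (by linarith : η ≤ π/3)
    rwa [Real.cos_pi_div_three] at h
  -- Φ σ2 < 0
  have hm2 : Real.sinh (m σ2) = c*σ2/(2*D*Real.sin σ2) := Real.sinh_arsinh _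
  have hx2pos : 0 < c*σ2/(2*D*Real.sin σ2) := by
    apply div_pos (by nlinarith) (by rw [hsinσ2]; positivity)
  have hm2nn : 0 ≤ m σ2 := by
    by_contra hn; push_neg at hn
    have h2 := Real.sinh_lt_sinh.mpr hn
    rw [hm2, Real.sinh_zero] at h2; linarith
  have hcosh2 : c*σ2/(2*D*Real.sin σ2) ≤ Real.cosh (m σ2) := by
    have h := Real.cosh_sub_sinh (m σ2)
    have := Real.exp_pos (-(m σ2))
    linarith [hm2]
  have hΦσ2 : Φ σ2 < 0 := by
    have hcosneg : Real.cos σ2 < 0 := by rw [hcosσ2]; linarith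
    have key1 : 2*D*Real.cosh (m σ2)*Real.cos σ2 ≤ 2*D*(c*σ2/(2*D*Real.sin σ2))*Real.cos σ2 := by
      have h := mul_le_mul_of_nonpos_right hcosh2 hcosneg.le
      nlinarith [h]
    have key2 : 2*D*(c*σ2/(2*D*Real.sin σ2))*Real.cos σ2 = -(c*σ2*Real.cos η/Real.sin η) := by
      rw [hcosσ2, hsinσ2]; field_simp
    have key3 : c/η ≤ c*σ2*Real.cos η/Real.sin η := by
      have h0 : (1:ℝ) ≤ σ2*Real.cos η := by
        nlinarith [mul_le_mul_of_nonneg_left hcosη (by linarith : (0:ℝ) ≤ σ2)]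
      have h1 : c ≤ c*(σ2*Real.cos η) := by nlinarith
      have h2 : c/η ≤ c/Real.sin η := by
        apply div_le_div_of_nonneg_left hc0.le hsinη_pos hsinη_le
      calc c/η ≤ c/Real.sin η := h2
        _ ≤ c*σ2*Real.cos η/Real.sin η := by
            gcongr
            nlinarith
    have key4 : |γ|+1 ≤ c/η := by
      rw [le_div_iff₀ hη0]
      have hle := min_le_right (1/2:ℝ) (c/(|γ|+1))
      calc (|γ|+1)*η ≤ (|γ|+1)*(c/(|γ|+1)) := by
            apply mul_le_mul_of_nonneg_left _ (by positivity)
            rw [hηdef]; exact hle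
        _ = c := by field_simp
    have hγle : γ ≤ |γ| := le_abs_self γ
    have : Φ σ2 ≤ -(c/η) - 2*D - c*(m σ2) + γ := by
      rw [hΦdef]
      simp only []
      have := key1.trans_eq key2
      linarith [key3]
    have h5 : 0 ≤ c * m σ2 := mul_nonneg hc0.le hm2nn
    exact lt_of_le_of_lt this (by linarith)
  -- limit of Φ at 0+
  have hslope : Tendsto (fun σ : ℝ => Real.sin σ / σ) (𝓝[≠] (0:ℝ)) (𝓝 1) := by
    have h := hasDerivAt_iff_tendsto_slope.mp (Real.hasDerivAt_sin 0)
    rw [Real.cos_zero] at h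
    have heq : (fun σ : ℝ => Real.sin σ / σ) = slope Real.sin 0 := by
      funext x; simp [slope_def_field]
    rw [heq]; exact h
  have hratio : Tendsto (fun σ : ℝ => c*σ/(2*D*Real.sin σ)) (𝓝[>] (0:ℝ)) (𝓝 (c/(2*D))) := by
    have h1 : Tendsto (fun σ : ℝ => Real.sin σ / σ) (𝓝[>] (0:ℝ)) (𝓝 1) :=
      hslope.mono_left (nhdsWithin_mono _ fun x hx => ne_of_gt hx)
    have h2 := h1.inv₀ one_ne_zero
    have h3 := h2.const_mul (c/(2*D))
    rw [inv_one, mul_one] at h3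
    refine h3.congr fun σ => ?_
    rw [inv_div, div_mul_div_comm]
  have hm0 : Tendsto m (𝓝[>] (0:ℝ)) (𝓝 μ0) := (Real.continuous_arsinh.tendsto _).comp hratio
  have hΦ0 : Tendsto Φ (𝓝[>] (0:ℝ))
      (𝓝 (2*D*Real.cosh μ0*Real.cos 0 - 2*D - c*μ0 + γ)) := by
    have hcos : Tendsto (fun σ : ℝ => Real.cos σ) (𝓝[>] (0:ℝ)) (𝓝 (Real.cos 0)) :=
      (Real.continuous_cos.tendsto 0).mono_left nhdsWithin_le_nhds
    have hcosh : Tendsto (fun σ => Real.cosh (m σ)) (𝓝[>] (0:ℝ)) (𝓝 (Real.cosh μ0)) :=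
      (Real.continuous_cosh.tendsto _).comp hm0
    rw [hΦdef]
    exact ((((tendsto_const_nhds.mul hcosh).mul hcos).sub tendsto_const_nhds).sub
      (hm0.const_mul c)).add tendsto_const_nhds
  have hL0 : 0 < 2*D*Real.cosh μ0*Real.cos 0 - 2*D - c*μ0 + γ := by
    rw [Real.cos_zero, Real.cosh_eq]; nlinarith [hPγ]
  have hev : ∀ᶠ σ in 𝓝[>] (0:ℝ), 0 < Φ σ := hΦ0.eventually (eventually_gt_nhds hL0)
  have hev2 : ∀ᶠ σ in 𝓝[>] (0:ℝ), σ < σ2 :=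
    (eventually_lt_nhds (by linarith : (0:ℝ) < σ2)).filter_mono nhdsWithin_le_nhds
  have hev3 : ∀ᶠ σ in 𝓝[>] (0:ℝ), 0 < σ := eventually_mem_nhdsWithin
  obtain ⟨σ1, hΦσ1, hσ1σ2, hσ1pos⟩ := (hev.and (hev2.and hev3)).exists
  -- IVT
  have hcont : ContinuousOn Φ (Set.Icc σ1 σ2) := by
    have hsinne : ∀ x ∈ Set.Icc σ1 σ2, 2*D*Real.sin x ≠ 0 := by
      intro x hx
      have : 0 < Real.sin x :=
        Real.sin_pos_of_pos_of_lt_pi (lt_of_lt_of_le hσ1pos hx.1) (lt_of_le_of_lt hx.2 hσ2pi)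
      positivity
    have hmc : ContinuousOn m (Set.Icc σ1 σ2) := by
      apply Real.continuous_arsinh.comp_continuousOn
      exact ContinuousOn.div (continuous_const.mul continuous_id).continuousOn
        (continuous_const.mul Real.continuous_sin).continuousOn hsinne
    rw [hΦdef]
    exact (((continuousOn_const.mul (Real.continuous_cosh.comp_continuousOn hmc)).mul
      Real.continuous_cos.continuousOn).sub continuousOn_const).sub
      (continuousOn_const.mul hmc) |>.add continuousOn_const
  have h0mem : (0:ℝ) ∈ Set.Icc (Φ σ2) (Φ σ1) := ⟨hΦσ2.le, hΦσ1.le⟩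
  obtain ⟨σ0, hσ0mem, hΦval⟩ := intermediate_value_Icc' hσ1σ2.le hcont h0mem
  have hσ0pos : 0 < σ0 := lt_of_lt_of_le hσ1pos hσ0mem.1
  have hσ0pi : σ0 < π := lt_of_le_of_lt hσ0mem.2 hσ2pi
  have hsin0 : 0 < Real.sin σ0 := Real.sin_pos_of_pos_of_lt_pi hσ0pos hσ0pi
  refine ⟨σ0, m σ0, hσ0pos, hσ0pi, ?_, ?_⟩
  · have hs : Real.sinh (m σ0) = c*σ0/(2*D*Real.sin σ0) := Real.sinh_arsinh _
    rw [Real.sinh_eq] at hs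
    field_simp at hs
    linarith
  · have h := hΦval.symm
    rw [hΦdef] at h
    simp only [] at h
    rw [Real.cosh_eq] at h
    linarith

lemma aux_vderiv (μ σ a ξ : ℝ) :
    HasDerivAt (fun x => Real.exp (μ*x) * Real.sin (σ*(x - a)))
      (Real.exp (μ*ξ)*(μ*Real.sin (σ*(ξ-a)) + σ*Real.cos (σ*(ξ-a)))) ξ := by
  have h1 : HasDerivAt (fun x : ℝ => μ*x) μ ξ := by
    simpa using (hasDerivAt_id ξ).const_mul μ
  have h2 : HasDerivAt (fun x : ℝ => Real.exp (μ*x)) (Real.exp (μ*ξ) * μ) ξ :=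
    (Real.hasDerivAt_exp (μ*ξ)).comp ξ h1
  have h3 : HasDerivAt (fun x : ℝ => σ*(x - a)) σ ξ := by
    simpa using ((hasDerivAt_id ξ).sub_const a).const_mul σ
  have h4 : HasDerivAt (fun x : ℝ => Real.sin (σ*(x-a))) (Real.cos (σ*(ξ-a)) * σ) ξ :=
    by have := (Real.hasDerivAt_sin (σ*(ξ-a))).comp ξ h3; exact this
  have h5 := h2.mul h4
  refine h5.congr_deriv ?_
  ring

lemma aux_veq (D c γ μ σ a ξ : ℝ)
    (hI1 : D*(Real.exp μ - Real.exp (-μ)) * Real.sin σ = c*σ)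
    (hI2 : D*(Real.exp μ + Real.exp (-μ))*Real.cos σ - 2*D - c*μ + γ = 0) :
    c * (Real.exp (μ*ξ)*(μ*Real.sin (σ*(ξ-a)) + σ*Real.cos (σ*(ξ-a)))) =
      D*(Real.exp (μ*(ξ+1)) * Real.sin (σ*(ξ+1-a)) + Real.exp (μ*(ξ-1)) * Real.sin (σ*(ξ-1-a))
        - 2*(Real.exp (μ*ξ) * Real.sin (σ*(ξ-a)))) + γ*(Real.exp (μ*ξ) * Real.sin (σ*(ξ-a))) := by
  rw [show μ*(ξ+1) = μ*ξ + μ by ring, Real.exp_add,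
      show μ*(ξ-1) = μ*ξ + -μ by ring, Real.exp_add,
      show σ*(ξ+1-a) = σ*(ξ-a) + σ by ring, Real.sin_add,
      show σ*(ξ-1-a) = σ*(ξ-a) - σ by ring, Real.sin_sub]
  linear_combination (-(Real.exp (μ*ξ) * Real.cos (σ*(ξ-a)))) * hI1 +
    (-(Real.exp (μ*ξ) * Real.sin (σ*(ξ-a)))) * hI2

set_option maxHeartbeats 1000000 in
/-- Nonexistence of invasion traveling wave profiles for speeds `0 < c < c*`. -/

theorem stmt13 (D τ : ℝ) (hD : 0 < D) (hτ : 0 ≤ τ)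
    (g : ℝ → ℝ → ℝ) (hH1 : HypH1 g) (hH2 : HypH2 g) (hH3 : HypH3 g)
    (c : ℝ) (hc0 : 0 < c) (hc : c < critSpeed D (g 0 0)) :
    ¬ ∃ φ : ℝ → ℝ, ContDiff ℝ 1 φ ∧
      (∀ ξ : ℝ, 0 < φ ξ ∧ φ ξ ≤ 1) ∧
      (∀ ξ : ℝ, c * deriv φ ξ =
        D * (φ (ξ+1) + φ (ξ-1) - 2 * φ ξ) + φ ξ * g (φ ξ) (φ (ξ - c*τ))) ∧
      Tendsto φ atBot (nhds 0) ∧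
      0 < Filter.liminf φ atTop ∧ Filter.limsup φ atTop ≤ 1 := by
  rintro ⟨φ, hφC1, hφb, hφeq, hφ0, -, -⟩
  obtain ⟨hg10, -⟩ := hH1
  obtain ⟨⟨L, hL⟩, hanti, -, -⟩ := hH2
  have hφpos : ∀ ξ, 0 < φ ξ := fun ξ => (hφb ξ).1
  have hφdiff : Differentiable ℝ φ := hφC1.differentiable one_ne_zero
  -- g 0 0 > 0
  have hr : 0 < g 0 0 := by
    have h := hanti 0 (Set.mem_Icc.mpr ⟨le_rfl, zero_le_one⟩)
      (Set.mem_Icc.mpr ⟨le_rfl, zero_le_one⟩) (Set.mem_Icc.mpr ⟨zero_le_one, le_rfl⟩) zero_lt_one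
    simpa [hg10] using h
  -- elementary: exp l + exp (-l) ≥ 2
  have hA : ∀ l : ℝ, 0 ≤ Real.exp l + Real.exp (-l) - 2 := by
    intro l
    have e1 : Real.exp (l/2) * Real.exp (l/2) = Real.exp l := by
      rw [← Real.exp_add]; ring_nf
    have e2 : Real.exp (-(l/2)) * Real.exp (-(l/2)) = Real.exp (-l) := by
      rw [← Real.exp_add]; ring_nf
    have e3 : Real.exp (l/2) * Real.exp (-(l/2)) = 1 := by
      rw [← Real.exp_add]; ring_nf; exact Real.exp_zero
    nlinarith only [sq_nonneg (Real.exp (l/2) - Real.exp (-(l/2))), e1, e2, e3]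
  -- below critical speed
  have hcrit : ∀ l : ℝ, 0 < l → c * l < D * (Real.exp l + Real.exp (-l) - 2) + g 0 0 := by
    intro l hl
    rw [critSpeed] at hc
    have hbdd : BddBelow {y : ℝ | ∃ l : ℝ, 0 < l ∧
        y = (D * (Real.exp l + Real.exp (-l) - 2) + g 0 0) / l} := by
      refine ⟨0, ?_⟩
      rintro y ⟨l, hl, rfl⟩
      exact div_nonneg (add_nonneg (mul_nonneg hD.le (hA l)) hr.le) hl.le
    have hlt : c < (D * (Real.exp l + Real.exp (-l) - 2) + g 0 0) / l :=
      lt_of_lt_of_le hc (csInf_le hbdd ⟨l, hl, rfl⟩)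
    exact (lt_div_iff₀ hl).mp hlt
  -- constants
  obtain ⟨μ0, hμ0def⟩ : ∃ x : ℝ, x = Real.arsinh (c/(2*D)) := ⟨_, rfl⟩
  have hμ0pos : 0 < μ0 := by
    by_contra hn; push_neg at hn
    have h2 := Real.sinh_le_sinh.mpr hn
    rw [hμ0def, Real.sinh_arsinh, Real.sinh_zero] at h2
    have h3 : 0 < c/(2*D) := by positivity
    linarith only [h2, h3]
  have hPr : 0 < D*(Real.exp μ0 + Real.exp (-μ0) - 2) - c*μ0 + g 0 0 := by
    have h := hcrit μ0 hμ0pos; linarith only [h]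
  obtain ⟨ε, hεd⟩ : ∃ x : ℝ, x =
      min ((D*(Real.exp μ0 + Real.exp (-μ0) - 2) - c*μ0 + g 0 0)/2) (g 0 0/2) := ⟨_, rfl⟩
  have hε : 0 < ε := by
    rw [hεd]; exact lt_min (by linarith only [hPr]) (by linarith only [hr])
  obtain ⟨γ, hγd⟩ : ∃ x : ℝ, x = g 0 0 - ε := ⟨_, rfl⟩
  have hPγ : 0 < D*(Real.exp (Real.arsinh (c/(2*D))) + Real.exp (-Real.arsinh (c/(2*D))) - 2)
      - c*Real.arsinh (c/(2*D)) + γ := by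
    rw [← hμ0def, hγd]
    have h1 : ε ≤ (D*(Real.exp μ0 + Real.exp (-μ0) - 2) - c*μ0 + g 0 0)/2 := by
      rw [hεd]; exact min_le_left _ _
    linarith only [h1, hPr]
  obtain ⟨σ0, μ, hσ0pos, hσ0pi, hI1, hI2⟩ := aux_root D c γ hD hc0 hPγ
  -- the region where the linearized inequality holds
  obtain ⟨ε', hε'd⟩ : ∃ x : ℝ, x = ε/((L:ℝ)+1) := ⟨_, rfl⟩
  have hL1 : (0:ℝ) < (L:ℝ)+1 := by positivity
  have hε' : 0 < ε' := by rw [hε'd]; exact div_pos hε hL1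
  have hLε : (L:ℝ)*ε' ≤ ε := by
    rw [hε'd]
    calc (L:ℝ)*(ε/((L:ℝ)+1)) = ε*((L:ℝ)/((L:ℝ)+1)) := by ring
      _ ≤ ε*1 := mul_le_mul_of_nonneg_left ((div_le_one hL1).mpr (by linarith only [])) hε.le
      _ = ε := mul_one ε
  have hgLB : ∀ u v : ℝ, 0 ≤ u → 0 ≤ v → g 0 0 - (L:ℝ) * max u v ≤ g u v := by
    intro u v hu hv
    have h := hL.dist_le_mul (u, v) (0, 0)
    simp only [Prod.dist_eq, Real.dist_eq, sub_zero] at h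
    rw [abs_of_nonneg hu, abs_of_nonneg hv] at h
    have h3 := abs_le.mp h
    linarith only [h3.1]
  obtain ⟨X, hX⟩ : ∃ X : ℝ, ∀ ξ ≤ X, φ ξ < ε' := by
    have hev := hφ0.eventually (eventually_lt_nhds hε')
    exact eventually_atBot.mp hev
  have hstar : ∀ ξ : ℝ, ξ ≤ X →
      D * (φ (ξ+1) + φ (ξ-1) - 2 * φ ξ) + γ * φ ξ ≤ c * deriv φ ξ := by
    intro ξ hξ
    have h1 : φ ξ < ε' := hX ξ hξ
    have hcτ : 0 ≤ c*τ := mul_nonneg hc0.le hτ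
    have h2 : φ (ξ - c*τ) < ε' := hX _ (by linarith only [hcτ, hξ])
    have h3 := hgLB (φ ξ) (φ (ξ - c*τ)) (hφpos _).le (hφpos _).le
    have h4 : max (φ ξ) (φ (ξ - c*τ)) ≤ ε' := max_le h1.le h2.le
    have h6 : (L:ℝ)*max (φ ξ) (φ (ξ - c*τ)) ≤ (L:ℝ)*ε' :=
      mul_le_mul_of_nonneg_left h4 L.coe_nonneg
    have h5 : γ ≤ g (φ ξ) (φ (ξ - c*τ)) := by rw [hγd]; linarith only [h3, h6, hLε]
    have h7 := hφeq ξ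
    have h8 := mul_le_mul_of_nonneg_left h5 (hφpos ξ).le
    linarith only [h7, h8]
  -- window
  obtain ⟨hh, hhd⟩ : ∃ x : ℝ, x = π/σ0 := ⟨_, rfl⟩
  have hh1 : 1 < hh := by rw [hhd]; exact (one_lt_div hσ0pos).mpr hσ0pi
  obtain ⟨a, had⟩ : ∃ x : ℝ, x = X - 2 - hh := ⟨_, rfl⟩
  have haX : a + hh + 1 ≤ X := by rw [had]; linarith only []
  obtain ⟨v, hvdef⟩ : ∃ w : ℝ → ℝ, w = fun ξ => Real.exp (μ*ξ) * Real.sin (σ0*(ξ - a)) :=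
    ⟨_, rfl⟩
  have hσ0hh : σ0 * hh = π := by
    rw [hhd]; field_simp
  have hva : v a = 0 := by simp [hvdef]
  have hvah : v (a+hh) = 0 := by
    simp only [hvdef]
    rw [show σ0*(a+hh-a) = σ0*hh by ring, hσ0hh, Real.sin_pi, mul_zero]
  have hvcont : Continuous v := by
    rw [hvdef]
    exact (Real.continuous_exp.comp (continuous_const.mul continuous_id)).mul
      (Real.continuous_sin.comp (continuous_const.mul (continuous_id.sub continuous_const)))
  -- v ≤ 0 to the left of a and to the right of a+hh
  have hvleft : ∀ q : ℝ, a - 1 ≤ q → q ≤ a → v q ≤ 0 := by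
    intro q h1 h2
    have harg1 : σ0*(q - a) ≤ 0 :=
      mul_nonpos_of_nonneg_of_nonpos hσ0pos.le (by linarith only [h2])
    have hsin : Real.sin (σ0*(q-a)) ≤ 0 := by
      rcases lt_or_eq_of_le harg1 with h | h
      · have hq : σ0*(-1) ≤ σ0*(q-a) :=
          mul_le_mul_of_nonneg_left (by linarith only [h1] : -(1:ℝ) ≤ q - a) hσ0pos.le
        have harg2 : -π < σ0*(q-a) := by linarith only [hq, hσ0pi]
        exact (Real.sin_neg_of_neg_of_neg_pi_lt h harg2).le
      · rw [h, Real.sin_zero]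
    simp only [hvdef]
    exact mul_nonpos_of_nonneg_of_nonpos (Real.exp_pos _).le hsin
  have hvright : ∀ q : ℝ, a + hh ≤ q → q ≤ a + hh + 1 → v q ≤ 0 := by
    intro q h1 h2
    have hq1 : σ0*hh ≤ σ0*(q-a) :=
      mul_le_mul_of_nonneg_left (by linarith only [h1] : hh ≤ q - a) hσ0pos.le
    have hq2 : σ0*(q-a) ≤ σ0*(hh+1) :=
      mul_le_mul_of_nonneg_left (by linarith only [h2] : q - a ≤ hh + 1) hσ0pos.le
    have hq3 : σ0*(hh+1) = π + σ0 := by rw [mul_add, hσ0hh, mul_one]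
    have harg1 : π ≤ σ0*(q-a) := by rw [← hσ0hh]; exact hq1
    have harg2 : σ0*(q-a) ≤ π + σ0 := by rw [← hq3]; exact hq2
    have hsin : Real.sin (σ0*(q-a)) ≤ 0 := by
      have h3 : Real.sin (σ0*(q-a) - π) = -Real.sin (σ0*(q-a)) := Real.sin_sub_pi _
      have h4 : 0 ≤ Real.sin (σ0*(q-a) - π) :=
        Real.sin_nonneg_of_nonneg_of_le_pi (by linarith only [harg1])
          (by linarith only [harg2, hσ0pi])
      linarith only [h3, h4]
    simp only [hvdef]
    exact mul_nonpos_of_nonneg_of_nonpos (Real.exp_pos _).le hsin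
  -- the sliding constant
  obtain ⟨K, hKdef⟩ : ∃ S : Set ℝ,
      S = {κ : ℝ | 0 ≤ κ ∧ ∀ ξ ∈ Set.Icc a (a+hh), κ * v ξ ≤ φ ξ} := ⟨_, rfl⟩
  have hK0 : (0:ℝ) ∈ K := by
    rw [hKdef]
    exact ⟨le_rfl, fun ξ _ => by rw [zero_mul]; exact (hφpos ξ).le⟩
  have hvmidpos : 0 < v (a + hh/2) := by
    simp only [hvdef]
    rw [show σ0*(a+hh/2-a) = σ0*hh/2 by ring, hσ0hh, Real.sin_pi_div_two, mul_one]
    exact Real.exp_pos _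
  have hbddK : BddAbove K := by
    refine ⟨φ (a+hh/2) / v (a+hh/2), ?_⟩
    intro κ hκ
    rw [hKdef] at hκ
    have := hκ.2 (a+hh/2) ⟨by linarith only [hh1], by linarith only [hh1]⟩
    exact (le_div_iff₀ hvmidpos).mpr this
  obtain ⟨κX, hκXd⟩ : ∃ x : ℝ, x = sSup K := ⟨_, rfl⟩
  have hκnn : 0 ≤ κX := by rw [hκXd]; exact le_csSup hbddK hK0
  have hκK2 : ∀ ξ ∈ Set.Icc a (a+hh), κX * v ξ ≤ φ ξ := by
    intro ξ hξ
    rcases le_or_gt (v ξ) 0 with hv | hv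
    · exact le_trans (mul_nonpos_of_nonneg_of_nonpos hκnn hv) (hφpos ξ).le
    · have hub : ∀ κ' ∈ K, κ' ≤ φ ξ / v ξ := by
        intro κ' hκ'
        rw [hKdef] at hκ'
        exact (le_div_iff₀ hv).mpr (hκ'.2 ξ hξ)
      have h := csSup_le ⟨0, hK0⟩ hub
      rw [← hκXd] at h
      exact (le_div_iff₀ hv).mp h
  -- touching point
  have htouch : ∃ ξ0 ∈ Set.Icc a (a+hh), φ ξ0 = κX * v ξ0 := by
    by_contra hno
    push_neg at hno
    have hstrict : ∀ ξ ∈ Set.Icc a (a+hh), κX * v ξ < φ ξ := fun ξ hξ =>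
      lt_of_le_of_ne (hκK2 ξ hξ) (fun h => hno ξ hξ h.symm)
    have hcompact : IsCompact (Set.Icc a (a+hh)) := isCompact_Icc
    have hne : (Set.Icc a (a+hh)).Nonempty := ⟨a, le_rfl, by linarith only [hh1]⟩
    have hwcont : ContinuousOn (fun ξ => φ ξ - κX * v ξ) (Set.Icc a (a+hh)) :=
      (hφdiff.continuous.sub (continuous_const.mul hvcont)).continuousOn
    obtain ⟨ξm, hξm, hmin⟩ := hcompact.exists_isMinOn hne hwcont
    have hη : 0 < φ ξm - κX * v ξm := by
      have h := hstrict ξm hξm; linarith only [h]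
    obtain ⟨B, hBB⟩ := hcompact.exists_bound_of_continuousOn hvcont.continuousOn
    have hBnn : 0 ≤ B := le_trans (norm_nonneg _) (hBB a ⟨le_rfl, by linarith only [hh1]⟩)
    obtain ⟨e, hed⟩ : ∃ x : ℝ, x = (φ ξm - κX * v ξm)/(B+1) := ⟨_, rfl⟩
    have hepos : 0 < e := by rw [hed]; exact div_pos hη (by linarith only [hBnn])
    have hmem : κX + e ∈ K := by
      rw [hKdef]
      refine ⟨by linarith only [hκnn, hepos], fun ξ hξ => ?_⟩
      have h1 : φ ξm - κX * v ξm ≤ φ ξ - κX * v ξ := hmin hξ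
      have h2 : |v ξ| ≤ B := hBB ξ hξ
      have h3 : e * v ξ ≤ e * B := mul_le_mul_of_nonneg_left (abs_le.mp h2).2 hepos.le
      have h4 : e * B < φ ξm - κX * v ξm := by
        rw [hed, div_mul_eq_mul_div, div_lt_iff₀ (by linarith only [hBnn] : (0:ℝ) < B+1)]
        linarith only [hη]
      linarith only [h1, h3, h4]
    have h5 := le_csSup hbddK hmem
    rw [← hκXd] at h5
    linarith only [h5, hepos]
  obtain ⟨ξ0, hξ0Icc, hξ0⟩ := htouch
  have hvξ0 : 0 < v ξ0 := by
    by_contra hn; push_neg at hn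
    have h1 := hφpos ξ0
    rw [hξ0] at h1
    have h2 := mul_nonpos_of_nonneg_of_nonpos hκnn hn
    linarith only [h1, h2]
  have hξ0a : a < ξ0 := by
    rcases lt_or_eq_of_le hξ0Icc.1 with h | h
    · exact h
    · exfalso; rw [← h, hva] at hvξ0; exact lt_irrefl _ hvξ0
  have hξ0b : ξ0 < a + hh := by
    rcases lt_or_eq_of_le hξ0Icc.2 with h | h
    · exact h
    · exfalso; rw [h, hvah] at hvξ0; exact lt_irrefl _ hvξ0
  -- nonnegativity of z on the extended window
  have hznn : ∀ q : ℝ, a - 1 ≤ q → q ≤ a + hh + 1 → 0 ≤ φ q - κX * v q := by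
    intro q h1 h2
    rcases le_or_gt q a with hqa | hqa
    · have hv := hvleft q h1 hqa
      have h3 := mul_nonpos_of_nonneg_of_nonpos hκnn hv
      linarith only [h3, hφpos q]
    rcases le_or_gt q (a+hh) with hqh | hqh
    · have := hκK2 q ⟨hqa.le, hqh⟩; linarith only [this]
    · have hv := hvright q hqh.le h2
      have h3 := mul_nonpos_of_nonneg_of_nonpos hκnn hv
      linarith only [h3, hφpos q]
  have hzposL : ∀ q : ℝ, a - 1 ≤ q → q ≤ a → 0 < φ q - κX * v q := by
    intro q h1 h2
    have hv := hvleft q h1 h2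
    have h3 := mul_nonpos_of_nonneg_of_nonpos hκnn hv
    linarith only [h3, hφpos q]
  -- propagation of zeros of z
  have hBprop : ∀ p : ℝ, a < p → p < a + hh → φ p - κX * v p = 0 →
      φ (p-1) - κX * v (p-1) = 0 := by
    intro p hpa hpb hzp
    have hnb : Set.Ioo (a-1) (a+hh+1) ∈ 𝓝 p :=
      Ioo_mem_nhds (by linarith only [hpa]) (by linarith only [hpb])
    have hmin : IsLocalMin (fun ξ => φ ξ - κX * v ξ) p := by
      apply Filter.eventually_of_mem hnb
      intro x hx
      show φ p - κX * v p ≤ φ x - κX * v x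
      have h10 := hznn x (le_of_lt hx.1) (le_of_lt hx.2)
      linarith only [hzp, h10]
    obtain ⟨dvp, hdvpd⟩ : ∃ x : ℝ,
        x = Real.exp (μ*p)*(μ*Real.sin (σ0*(p-a)) + σ0*Real.cos (σ0*(p-a))) := ⟨_, rfl⟩
    have hvd : HasDerivAt v dvp p := by
      rw [hvdef, hdvpd]; exact aux_vderiv μ σ0 a p
    have hzd : HasDerivAt (fun ξ => φ ξ - κX * v ξ) (deriv φ p - κX * dvp) p :=
      ((hφdiff p).hasDerivAt).sub (hvd.const_mul κX)
    have hder0 : deriv φ p - κX * dvp = 0 := hzd.deriv.symm.trans hmin.deriv_eq_zero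
    have hstarp := hstar p (by linarith only [hpb, haX])
    have hveqp : c * dvp = D*(v (p+1) + v (p-1) - 2*(v p)) + γ*(v p) := by
      rw [hdvpd]
      simp only [hvdef]
      exact aux_veq D c γ μ σ0 a p hI1 hI2
    have hcv : c * deriv φ p = κX * (c * dvp) := by
      have h9 : deriv φ p = κX * dvp := by linarith only [hder0]
      rw [h9]; ring
    have hT : κX * (c * dvp) = κX * (D*(v (p+1) + v (p-1) - 2*(v p)) + γ*(v p)) := by
      rw [hveqp]
    have hz1 : 0 ≤ φ (p+1) - κX * v (p+1) :=
      hznn (p+1) (by linarith only [hpa]) (by linarith only [hpb])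
    have hz2 : 0 ≤ φ (p-1) - κX * v (p-1) :=
      hznn (p-1) (by linarith only [hpa]) (by linarith only [hpb, hh1])
    have hexp : D * ((φ (p+1) - κX*v (p+1)) + (φ (p-1) - κX*v (p-1))) =
        (D * (φ (p+1) + φ (p-1) - 2 * φ p) + γ * φ p)
        - κX * (D*(v (p+1) + v (p-1) - 2*(v p)) + γ*(v p))
        + (2*D - γ)*(φ p - κX*v p) := by ring
    have h0 : (2*D - γ)*(φ p - κX*v p) = 0 := by rw [hzp, mul_zero]
    have hkey : D * ((φ (p+1) - κX*v (p+1)) + (φ (p-1) - κX*v (p-1))) ≤ 0 := by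
      rw [hexp, h0]
      linarith only [hstarp, hcv, hT]
    have hDz2 : φ (p-1) - κX * v (p-1) ≤ 0 := by
      nlinarith only [hkey, mul_nonneg hD.le hz1, hD, hz2]
    linarith only [hDz2, hz2]
  -- iterate the zero backwards
  have hzero0 : φ ξ0 - κX * v ξ0 = 0 := by rw [hξ0]; ring
  have hchain : ∀ n : ℕ, a < ξ0 - n → φ (ξ0 - n) - κX * v (ξ0 - n) = 0 := by
    intro n
    induction n with
    | zero => intro _; simpa using hzero0
    | succ k ih =>
      intro hlt
      push_cast at hlt
      have h1 : a < ξ0 - k := by linarith only [hlt]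
      have hk0 : (0:ℝ) ≤ (k:ℝ) := Nat.cast_nonneg k
      have h2 : ξ0 - k < a + hh := by linarith only [hξ0b, hk0]
      have h4 := hBprop (ξ0 - k) h1 h2 (ih h1)
      push_cast
      rw [show ξ0 - ((k:ℝ)+1) = (ξ0 - (k:ℝ)) - 1 by ring]
      exact h4
  obtain ⟨j, hjd⟩ : ∃ n : ℕ, n = ⌊ξ0 - a⌋₊ := ⟨_, rfl⟩
  have hj1 : (j:ℝ) ≤ ξ0 - a := by
    rw [hjd]; exact Nat.floor_le (by linarith only [hξ0a])
  have hj2 : ξ0 - a < (j:ℝ) + 1 := by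
    rw [hjd]; exact Nat.lt_floor_add_one _
  by_cases hcase : (j:ℝ) < ξ0 - a
  · have hpa : a < ξ0 - j := by linarith only [hcase]
    have hpb : ξ0 - (j:ℝ) < a + hh := by linarith only [hj2, hh1]
    have hz := hchain j hpa
    have hfin := hBprop (ξ0 - j) hpa hpb hz
    have hpos := hzposL (ξ0 - (j:ℝ) - 1) (by linarith only [hcase]) (by linarith only [hj2])
    linarith only [hfin, hpos]
  · have hjeq : (j:ℝ) = ξ0 - a := le_antisymm hj1 (not_lt.mp hcase)
    have hj1' : 1 ≤ j := by
      by_contra hjj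
      push_neg at hjj
      have hj0 : j = 0 := by omega
      rw [hj0] at hjeq
      simp at hjeq
      linarith only [hjeq, hξ0a]
    have hcast : ((j - 1 : ℕ) : ℝ) = (j:ℝ) - 1 := by
      rw [Nat.cast_sub hj1']; simp
    have hz := hchain (j-1) (by rw [hcast]; linarith only [hjeq])
    rw [hcast, show ξ0 - ((j:ℝ) - 1) = a + 1 by linarith only [hjeq]] at hz
    have hfin := hBprop (a+1) (by linarith only []) (by linarith only [hh1]) hz
    have hpos := hzposL (a+1-1) (by linarith only []) (by linarith only [])
    linarith only [hfin, hpos]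
end

section
/- Let D > 0, τ ≥ 0, and let g : ℝ² → ℝ satisfy (H1), (H2), (H3), (H4), with E ∈ (0,1) the unique value with g(E,E) = 0. Define c* = inf_{λ>0} [D(e^λ + e^{−λ} − 2) + g(0,0)]/λ. If c ≥ c* and φ : ℝ → ℝ is a C¹ function with 0 < φ(ξ) ≤ 1 satisfying the wave profile equation c·φ'(ξ) = D(φ(ξ+1) + φ(ξ−1) − 2φ(ξ)) + φ(ξ)·g(φ(ξ), φ(ξ − cτ)) for all ξ ∈ ℝ and the conditions lim_{ξ→−∞} φ(ξ) = 0 and 0 < liminf_{ξ→∞} φ(ξ) ≤ limsup_{ξ→∞} φ(ξ) ≤ 1, then in fact lim_{ξ→∞} φ(ξ) = E. -/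
open Real Filter

private lemma decayLem (f : ℝ → ℝ) (hf : Differentiable ℝ f) {a b m : ℝ} (hab : a ≤ b)
    (hder : ∀ u ∈ Set.Icc a b, deriv f u ≤ -m) : f b - f a ≤ -(m * (b - a)) := by
  have key : AntitoneOn (fun u => f u + m * u) (Set.Icc a b) := by
    apply antitoneOn_of_deriv_nonpos (convex_Icc a b)
    · exact (hf.continuous.add (continuous_const.mul continuous_id)).continuousOn
    · exact (hf.add ((differentiable_const m).mul differentiable_id)).differentiableOn
    · intro x hx
      rw [interior_Icc] at hx
      have h1 : deriv (fun u => f u + m * u) x = deriv f x + m := by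
        have hdm : DifferentiableAt ℝ (fun u : ℝ => m * u) x :=
          (differentiableAt_id.const_mul m)
        rw [deriv_fun_add (hf x) hdm, deriv_const_mul _ differentiableAt_id, deriv_id'']
        ring
      rw [h1]
      have := hder x ⟨hx.1.le, hx.2.le⟩
      linarith
  have h2 := key (Set.left_mem_Icc.2 hab) (Set.right_mem_Icc.2 hab) hab
  simp only at h2
  linarith

private lemma growLem (f : ℝ → ℝ) (hf : Differentiable ℝ f) {a b m : ℝ} (hab : a ≤ b)
    (hder : ∀ u ∈ Set.Icc a b, m ≤ deriv f u) : m * (b - a) ≤ f b - f a := by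
  have h := decayLem (fun u => -(f u)) hf.neg hab (m := m) (fun u hu => by
    have h1 : deriv (fun u => -(f u)) u = -(deriv f u) := by
      simp [deriv.fun_neg]
    rw [h1]
    have := hder u hu
    linarith)
  linarith

private lemma lipLem (f : ℝ → ℝ) (hf : Differentiable ℝ f) {M : ℝ}
    (hM : ∀ x, |deriv f x| ≤ M) (a b : ℝ) : |f b - f a| ≤ M * |b - a| := by
  rcases le_total a b with hab | hab
  · have h1 := decayLem f hf hab (m := -M) (fun u _ => by have := abs_le.1 (hM u); linarith)
    have h2 := growLem f hf hab (m := -M) (fun u _ => by have := abs_le.1 (hM u); linarith)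
    rw [abs_le, abs_of_nonneg (sub_nonneg.2 hab)]
    constructor <;> nlinarith
  · have h1 := decayLem f hf hab (m := -M) (fun u _ => by have := abs_le.1 (hM u); linarith)
    have h2 := growLem f hf hab (m := -M) (fun u _ => by have := abs_le.1 (hM u); linarith)
    rw [abs_le, abs_of_nonpos (sub_nonpos.2 hab)]
    constructor <;> nlinarith


set_option maxHeartbeats 2000000 in
/-- Under (H1)–(H4), every invasion traveling wave profile with speed `c ≥ c*`
in fact converges to `E` at `+∞`. -/
theorem stmt16 (D τ : ℝ) (hD : 0 < D) (hτ : 0 ≤ τ)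
    (g : ℝ → ℝ → ℝ) (E : ℝ) (hE : E ∈ Set.Ioo (0:ℝ) 1) (hgE : g E E = 0)
    (hH1 : HypH1 g) (hH2 : HypH2 g) (hH3 : HypH3 g) (hH4 : HypH4 g E)
    (c : ℝ) (hc : critSpeed D (g 0 0) ≤ c)
    (φ : ℝ → ℝ) (hφ : ContDiff ℝ 1 φ)
    (hrange : ∀ ξ : ℝ, 0 < φ ξ ∧ φ ξ ≤ 1)
    (hwave : ∀ ξ : ℝ, c * deriv φ ξ =
      D * (φ (ξ+1) + φ (ξ-1) - 2 * φ ξ) + φ ξ * g (φ ξ) (φ (ξ - c*τ)))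
    (hminus : Tendsto φ atBot (nhds 0))
    (hliminf : 0 < Filter.liminf φ atTop) (hlimsup : Filter.limsup φ atTop ≤ 1) :
    Tendsto φ atTop (nhds E) := by
  obtain ⟨⟨L, hL⟩, hA1, hA2, -⟩ := hH2
  obtain ⟨hg10, -⟩ := hH1
  set Lr : ℝ := (L : ℝ) with hLrdef
  have hLr0 : 0 ≤ Lr := L.coe_nonneg
  have hd : Differentiable ℝ φ := hφ.differentiable one_ne_zero
  have hφ0 : ∀ ξ, 0 < φ ξ := fun ξ => (hrange ξ).1
  have hφ1 : ∀ ξ, φ ξ ≤ 1 := fun ξ => (hrange ξ).2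
  -- Lipschitz estimate for g
  have hgpair : ∀ p q p' q' : ℝ, |g p q - g p' q'| ≤ Lr * max |p - p'| |q - q'| := by
    intro p q p' q'
    have h := hL.dist_le_mul (p, q) (p', q')
    simpa [Prod.dist_eq, Real.dist_eq] using h
  -- bound for g on the unit square
  obtain ⟨B, hBdef⟩ : ∃ b : ℝ, b = |g 0 0| + Lr := ⟨_, rfl⟩
  have hgB : ∀ p q : ℝ, |p| ≤ 1 → |q| ≤ 1 → |g p q| ≤ B := by
    intro p q hp hq
    have h := hgpair p q 0 0
    simp only [sub_zero] at h
    have hmax : max |p| |q| ≤ 1 := max_le hp hq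
    have h2 : Lr * max |p| |q| ≤ Lr := by nlinarith
    have h3 := abs_add_le (g p q - g 0 0) (g 0 0)
    simp only [sub_add_cancel] at h3
    rw [hBdef]
    linarith
  have hφabs : ∀ ξ, |φ ξ| ≤ 1 := fun ξ => by
    rw [abs_of_pos (hφ0 ξ)]; exact hφ1 ξ
  -- g 0 0 > 0
  have hr : 0 < g 0 0 := by
    have h01 : (0:ℝ) ∈ Set.Icc (0:ℝ) 1 := ⟨le_rfl, zero_le_one⟩
    have h11 : (1:ℝ) ∈ Set.Icc (0:ℝ) 1 := ⟨zero_le_one, le_rfl⟩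
    have h := hA1 0 h01 h01 h11 one_pos
    simp only at h
    rw [hg10] at h
    exact h
  have hB0 : 0 < B := lt_of_lt_of_le hr (le_trans (le_abs_self _) (by rw [hBdef]; linarith))
  -- positivity of c
  have hc0 : 0 < c := by
    have hmem : ∀ y ∈ {y : ℝ | ∃ l : ℝ, 0 < l ∧
        y = (D * (Real.exp l + Real.exp (-l) - 2) + g 0 0) / l}, min (D/2) (g 0 0) ≤ y := by
      rintro y ⟨l, hl, rfl⟩
      have h1 := Real.quadratic_le_exp_of_nonneg hl.le
      have h2 := Real.add_one_le_exp (-l)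
      have hnum : D * (l^2/2) + g 0 0 ≤ D * (Real.exp l + Real.exp (-l) - 2) + g 0 0 := by
        nlinarith
      have hmono := (div_le_div_iff_of_pos_right hl).mpr hnum
      rcases le_or_gt 1 l with h | h
      · have hll : l ≤ l^2 := by nlinarith
        have hstep : D/2 ≤ (D * (l^2/2) + g 0 0) / l := by
          rw [le_div_iff₀ hl]
          nlinarith [mul_le_mul_of_nonneg_left hll hD.le]
        exact le_trans (min_le_left _ _) (le_trans hstep hmono)
      · have hstep : g 0 0 ≤ (D * (l^2/2) + g 0 0) / l := by
          rw [le_div_iff₀ hl]; nlinarith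
        exact le_trans (min_le_right _ _) (le_trans hstep hmono)
    have hne : {y : ℝ | ∃ l : ℝ, 0 < l ∧
        y = (D * (Real.exp l + Real.exp (-l) - 2) + g 0 0) / l}.Nonempty :=
      ⟨_, 1, one_pos, rfl⟩
    have hinf := le_csInf hne hmem
    have hminpos : 0 < min (D/2) (g 0 0) := lt_min (by linarith) hr
    unfold critSpeed at hc
    linarith
  -- bound for the derivative
  obtain ⟨M, hMdef⟩ : ∃ m : ℝ, m = (4*D + B)/c := ⟨_, rfl⟩
  have hM0 : 0 < M := by rw [hMdef]; exact div_pos (by linarith) hc0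
  have hwb : ∀ ξ, |deriv φ ξ| ≤ M := by
    intro ξ
    have heq := hwave ξ
    have b1 := hφabs (ξ+1); have b2 := hφabs (ξ-1); have b3 := hφabs ξ
    have bg := hgB (φ ξ) (φ (ξ - c*τ)) (hφabs ξ) (hφabs (ξ - c*τ))
    have hS1 : |φ (ξ+1) + φ (ξ-1) - 2*φ ξ| ≤ 4 := by
      rw [abs_le] at b1 b2 b3 ⊢; constructor <;> [linarith; linarith]
    have h1 : |c * deriv φ ξ| ≤ 4*D + B := by
      rw [heq]
      calc |D * (φ (ξ+1) + φ (ξ-1) - 2*φ ξ) + φ ξ * g (φ ξ) (φ (ξ - c*τ))|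
          ≤ |D * (φ (ξ+1) + φ (ξ-1) - 2*φ ξ)| + |φ ξ * g (φ ξ) (φ (ξ - c*τ))| := abs_add_le _ _
        _ = D * |φ (ξ+1) + φ (ξ-1) - 2*φ ξ| + |φ ξ| * |g (φ ξ) (φ (ξ - c*τ))| := by
            rw [abs_mul, abs_mul, abs_of_pos hD]
        _ ≤ D * 4 + 1 * B := by
            have := abs_nonneg (g (φ ξ) (φ (ξ - c*τ)))
            have := abs_nonneg (φ ξ)
            apply add_le_add
            · exact mul_le_mul_of_nonneg_left hS1 hD.le
            · nlinarith
        _ = 4*D + B := by ring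
    rw [abs_mul, abs_of_pos hc0] at h1
    rw [hMdef, le_div_iff₀ hc0]
    linarith
  have hφLip : ∀ a b : ℝ, |φ b - φ a| ≤ M * |b - a| := lipLem φ hd hwb
  -- Lipschitz estimate for the derivative
  obtain ⟨K, hKdef⟩ : ∃ k : ℝ, k = ((4*D + B + Lr) * M)/c := ⟨_, rfl⟩
  have hK0 : 0 < K := by rw [hKdef]; exact div_pos (mul_pos (by linarith) hM0) hc0
  have hψLip : ∀ x y : ℝ, |deriv φ x - deriv φ y| ≤ K * |x - y| := by
    intro x y
    have hdiff : c * deriv φ x - c * deriv φ y =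
        D * ((φ (x+1) - φ (y+1)) + (φ (x-1) - φ (y-1)) - 2*(φ x - φ y))
        + ((φ x - φ y) * g (φ x) (φ (x - c*τ))
           + φ y * (g (φ x) (φ (x - c*τ)) - g (φ y) (φ (y - c*τ)))) := by
      rw [hwave x, hwave y]; ring
    set d : ℝ := |x - y| with hddef
    have e1 : |φ (x+1) - φ (y+1)| ≤ M * d := by
      have h := hφLip (y+1) (x+1)
      have : x + 1 - (y + 1) = x - y := by ring
      rwa [this] at h
    have e2 : |φ (x-1) - φ (y-1)| ≤ M * d := by
      have h := hφLip (y-1) (x-1)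
      have : x - 1 - (y - 1) = x - y := by ring
      rwa [this] at h
    have e3 : |φ x - φ y| ≤ M * d := hφLip y x
    have e4 : |φ (x - c*τ) - φ (y - c*τ)| ≤ M * d := by
      have h := hφLip (y - c*τ) (x - c*τ)
      have : x - c*τ - (y - c*τ) = x - y := by ring
      rwa [this] at h
    have e5 : |g (φ x) (φ (x - c*τ)) - g (φ y) (φ (y - c*τ))| ≤ Lr * (M * d) := by
      have h := hgpair (φ x) (φ (x - c*τ)) (φ y) (φ (y - c*τ))
      have hmax : max |φ x - φ y| |φ (x - c*τ) - φ (y - c*τ)| ≤ M * d := max_le e3 e4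
      exact le_trans h (mul_le_mul_of_nonneg_left hmax hLr0)
    have e6 : |g (φ x) (φ (x - c*τ))| ≤ B := hgB _ _ (hφabs x) (hφabs (x - c*τ))
    have habs : |c * deriv φ x - c * deriv φ y| ≤ (4*D + B + Lr) * M * d := by
      rw [hdiff]
      have t1 : |(φ (x+1) - φ (y+1)) + (φ (x-1) - φ (y-1)) - 2*(φ x - φ y)| ≤ 4 * (M*d) := by
        rw [abs_le] at e1 e2 e3 ⊢; constructor <;> [linarith; linarith]
      have t2 : |(φ x - φ y) * g (φ x) (φ (x - c*τ))
          + φ y * (g (φ x) (φ (x - c*τ)) - g (φ y) (φ (y - c*τ)))| ≤ B * (M*d) + Lr * (M*d) := by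
        calc |(φ x - φ y) * g (φ x) (φ (x - c*τ))
              + φ y * (g (φ x) (φ (x - c*τ)) - g (φ y) (φ (y - c*τ)))|
            ≤ |(φ x - φ y) * g (φ x) (φ (x - c*τ))|
              + |φ y * (g (φ x) (φ (x - c*τ)) - g (φ y) (φ (y - c*τ)))| := abs_add_le _ _
          _ = |φ x - φ y| * |g (φ x) (φ (x - c*τ))|
              + |φ y| * |g (φ x) (φ (x - c*τ)) - g (φ y) (φ (y - c*τ))| := by
              rw [abs_mul, abs_mul]
          _ ≤ B * (M*d) + Lr * (M*d) := by
              have n1 := abs_nonneg (φ x - φ y)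
              have n2 := abs_nonneg (g (φ x) (φ (x - c*τ)))
              have n3 := abs_nonneg (φ y)
              have n4 := abs_nonneg (g (φ x) (φ (x - c*τ)) - g (φ y) (φ (y - c*τ)))
              have hb := hφabs y
              nlinarith [mul_nonneg hM0.le (abs_nonneg (x - y))]
      calc |D * ((φ (x+1) - φ (y+1)) + (φ (x-1) - φ (y-1)) - 2*(φ x - φ y))
            + ((φ x - φ y) * g (φ x) (φ (x - c*τ))
               + φ y * (g (φ x) (φ (x - c*τ)) - g (φ y) (φ (y - c*τ))))|
          ≤ |D * ((φ (x+1) - φ (y+1)) + (φ (x-1) - φ (y-1)) - 2*(φ x - φ y))|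
            + |(φ x - φ y) * g (φ x) (φ (x - c*τ))
               + φ y * (g (φ x) (φ (x - c*τ)) - g (φ y) (φ (y - c*τ)))| := abs_add_le _ _
        _ ≤ D * (4*(M*d)) + (B * (M*d) + Lr * (M*d)) := by
            rw [abs_mul, abs_of_pos hD]
            exact add_le_add (mul_le_mul_of_nonneg_left t1 hD.le) t2
        _ = (4*D + B + Lr) * M * d := by ring
    have hc_out : |c * deriv φ x - c * deriv φ y| = c * |deriv φ x - deriv φ y| := by
      rw [← mul_sub, abs_mul, abs_of_pos hc0]
    rw [hc_out] at habs
    rw [hKdef]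
    rw [div_mul_eq_mul_div, le_div_iff₀ hc0]
    calc |deriv φ x - deriv φ y| * c = c * |deriv φ x - deriv φ y| := by ring
      _ ≤ (4*D + B + Lr) * M * d := habs
      _ = (4*D + B + Lr) * M * |x - y| := rfl
  -- limsup / liminf setup
  have hub : IsBoundedUnder (· ≤ ·) atTop φ := isBoundedUnder_of ⟨1, fun x => hφ1 x⟩
  have hlbd : IsBoundedUnder (· ≥ ·) atTop φ := isBoundedUnder_of ⟨0, fun x => (hφ0 x).le⟩
  obtain ⟨S, hSdef⟩ : ∃ s : ℝ, s = limsup φ atTop := ⟨_, rfl⟩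
  obtain ⟨I, hIdef⟩ : ∃ i : ℝ, i = liminf φ atTop := ⟨_, rfl⟩
  have hIS : I ≤ S := by rw [hSdef, hIdef]; exact liminf_le_limsup hub hlbd
  have hS1' : S ≤ 1 := by rw [hSdef]; exact hlimsup
  have hI0 : 0 < I := by rw [hIdef]; exact hliminf
  have hS0 : 0 < S := lt_of_lt_of_le hI0 hIS
  have hIle1 : I ≤ 1 := hIS.trans hS1'
  have hcτ : 0 ≤ c*τ := mul_nonneg hc0.le hτ
  have hφmem : ∀ ξ, φ ξ ∈ Set.Icc (0:ℝ) 1 := fun ξ => ⟨(hφ0 ξ).le, hφ1 ξ⟩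
  have hImem : I ∈ Set.Icc (0:ℝ) 1 := ⟨hI0.le, hIle1⟩
  have hSmem : S ∈ Set.Icc (0:ℝ) 1 := ⟨hS0.le, hS1'⟩
  -- Key claim A: 0 ≤ g S I
  have keyA : 0 ≤ g S I := by
    have main : ∀ ε : ℝ, 0 < ε → ε ≤ S/2 → ε ≤ I →
        -((2*(c+4*D)/S + 2*Lr) * ε) ≤ g S I := by
      intro ε hε hεS hεI
      set δ : ℝ := min ε (ε^2/(8*K)) with hδdef
      have hδ0 : 0 < δ := lt_min hε (div_pos (pow_pos hε 2) (by linarith))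
      have hδε : δ ≤ ε := min_le_left _ _
      have hδK : δ ≤ ε^2/(8*K) := min_le_right _ _
      have ev1 : ∀ᶠ t in atTop, φ t < S + δ :=
        eventually_lt_of_limsup_lt (by rw [← hSdef]; linarith) hub
      have ev2 : ∀ᶠ t in atTop, I - δ < φ t :=
        eventually_lt_of_lt_liminf (by rw [← hIdef]; linarith) hlbd
      obtain ⟨T₁, hT₁⟩ := eventually_atTop.1 (ev1.and ev2)
      set h : ℝ := ε/(2*K) with hhdef
      have hh0 : 0 < h := div_pos hε (by linarith)
      have freq : ∃ᶠ t in atTop, S - δ < φ t :=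
        frequently_lt_of_lt_limsup hlbd.isCoboundedUnder_le (by rw [← hSdef]; linarith)
      obtain ⟨t, htφ, htT⟩ := (freq.and_eventually (eventually_ge_atTop (T₁ + 1 + h + c*τ))).exists
      have ht1 : T₁ ≤ t - 1 := by linarith
      have ht1' : T₁ ≤ t + 1 := by linarith
      have htc : T₁ ≤ t - c*τ := by linarith
      have hth : T₁ ≤ t - h := by linarith
      have htt : T₁ ≤ t := by linarith
      -- derivative lower bound at t
      have hder : -ε ≤ deriv φ t := by
        by_contra hcon
        push_neg at hcon
        have hbound : ∀ u ∈ Set.Icc (t-h) t, deriv φ u ≤ -(ε/2) := by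
          intro u hu
          have h1 := hψLip u t
          have hut : |u - t| ≤ h := by
            rw [abs_le]; exact ⟨by linarith [hu.1], by linarith [hu.2]⟩
          have h2 : |deriv φ u - deriv φ t| ≤ K * h :=
            le_trans h1 (mul_le_mul_of_nonneg_left hut hK0.le)
          have hKh : K * h = ε/2 := by rw [hhdef]; field_simp [hK0.ne']
          rw [hKh, abs_le] at h2
          linarith [h2.2]
        have hdec := decayLem φ hd (show t - h ≤ t by linarith) hbound
        have hεh : ε/2 * (t - (t - h)) = ε^2/(4*K) := by
          rw [hhdef]; field_simp [hK0.ne']; ring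
        rw [hεh] at hdec
        have h2δ : 2*δ ≤ ε^2/(4*K) := by
          have : ε^2/(4*K) = 2*(ε^2/(8*K)) := by ring
          linarith
        have hcontr := (hT₁ (t-h) hth).1
        linarith
      -- estimates at t
      have heq := hwave t
      have hφt_lb : S - ε < φ t := by linarith
      have hφt_ub : φ t < S + ε := lt_of_lt_of_le (hT₁ t htt).1 (by linarith)
      have hn1 : φ (t+1) < S + ε := lt_of_lt_of_le (hT₁ (t+1) ht1').1 (by linarith)
      have hn2 : φ (t-1) < S + ε := lt_of_lt_of_le (hT₁ (t-1) ht1).1 (by linarith)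
      have hq_lb : I - ε < φ (t - c*τ) := lt_of_le_of_lt (by linarith) (hT₁ (t - c*τ) htc).2
      have hprod : -((c + 4*D) * ε) ≤ φ t * g (φ t) (φ (t - c*τ)) := by
        have hsum : φ (t+1) + φ (t-1) - 2*φ t ≤ 4*ε := by
          linarith only [hn1, hn2, hφt_lb]
        have hDpart : D * (φ (t+1) + φ (t-1) - 2*φ t) ≤ D * (4*ε) :=
          mul_le_mul_of_nonneg_left hsum hD.le
        have hcder : c * (-ε) ≤ c * deriv φ t :=
          mul_le_mul_of_nonneg_left hder hc0.le
        linarith only [heq, hDpart, hcder]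
      have hgq : -(2*(c+4*D)/S * ε) ≤ g (φ t) (φ (t - c*τ)) := by
        set Gq := g (φ t) (φ (t - c*τ)) with hGq
        rcases le_or_gt 0 Gq with h0 | h0
        · have : 0 ≤ 2*(c+4*D)/S * ε :=
            mul_nonneg (div_nonneg (by linarith) hS0.le) hε.le
          linarith
        · have hφhalf : S/2 ≤ φ t := by linarith only [hφt_lb, hεS]
          have hmul : φ t * Gq ≤ (S/2) * Gq := by
            have hfact : (φ t - S/2) * Gq ≤ 0 :=
              mul_nonpos_iff.mpr (Or.inl ⟨by linarith only [hφhalf], h0.le⟩)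
            linarith only [hfact]
          have key2 : -((c+4*D)*ε) ≤ S/2 * Gq := le_trans hprod hmul
          have hrw : -(2*(c+4*D)/S * ε) = (-((c+4*D)*ε))/(S/2) := by
            field_simp [hS0.ne']
          rw [hrw, div_le_iff₀ (by linarith only [hS0] : (0:ℝ) < S/2)]
          linarith only [key2]
      have hstep1 : g (φ t) (φ (t - c*τ)) - Lr*ε ≤ g (φ t) I := by
        have hLε : 0 ≤ Lr*ε := mul_nonneg hLr0 hε.le
        rcases le_or_gt I (φ (t - c*τ)) with hle | hlt
        · rcases eq_or_lt_of_le hle with heqI | hltI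
          · rw [← heqI]; linarith
          · have hanti := hA2 (φ t) (hφmem t) hImem (hφmem (t - c*τ)) hltI
            simp only at hanti
            linarith
        · have hd1 : |I - φ (t - c*τ)| ≤ ε := by
            rw [abs_le]
            refine ⟨by linarith [(hφ1 (t - c*τ))], by linarith⟩
          have hpp := hgpair (φ t) I (φ t) (φ (t - c*τ))
          have hmax : max |φ t - φ t| |I - φ (t - c*τ)| ≤ ε := by
            simp only [sub_self, abs_zero]
            exact max_le hε.le hd1
          have h2 : |g (φ t) I - g (φ t) (φ (t - c*τ))| ≤ Lr * ε :=
            le_trans hpp (mul_le_mul_of_nonneg_left hmax hLr0)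
          have := abs_le.1 h2
          linarith [this.1]
      have hstep2 : g (φ t) I - Lr*ε ≤ g S I := by
        have hd2 : |S - φ t| ≤ ε := by
          rw [abs_le]; exact ⟨by linarith, by linarith⟩
        have hpp := hgpair S I (φ t) I
        have hmax : max |S - φ t| |I - I| ≤ ε := by
          simp only [sub_self, abs_zero]
          exact max_le hd2 hε.le
        have h2 : |g S I - g (φ t) I| ≤ Lr * ε :=
          le_trans hpp (mul_le_mul_of_nonneg_left hmax hLr0)
        have := abs_le.1 h2
        linarith [this.1]
      have hdistr : (2*(c+4*D)/S + 2*Lr) * ε = 2*(c+4*D)/S*ε + 2*(Lr*ε) := by ring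
      rw [hdistr]
      have : -(2*(c+4*D)/S * ε) - 2*(Lr*ε) ≤ g S I := by linarith
      linarith
    by_contra hneg
    push_neg at hneg
    obtain ⟨C₁, hC₁⟩ : ∃ x : ℝ, x = 2*(c+4*D)/S + 2*Lr := ⟨_, rfl⟩
    have hC₁0 : 0 < C₁ := by
      have h0 : 0 < 2*(c+4*D)/S := div_pos (by linarith) hS0
      rw [hC₁]; linarith
    obtain ⟨ε, hεdef⟩ : ∃ x : ℝ, x = min (min (S/2) I) ((-(g S I))/(2*C₁)) := ⟨_, rfl⟩
    have hε0 : 0 < ε := by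
      rw [hεdef]
      exact lt_min (lt_min (by linarith) hI0) (div_pos (by linarith) (by linarith))
    have hεS : ε ≤ S/2 := by
      rw [hεdef]; exact le_trans (min_le_left _ _) (min_le_left _ _)
    have hεI : ε ≤ I := by
      rw [hεdef]; exact le_trans (min_le_left _ _) (min_le_right _ _)
    have h1 := main ε hε0 hεS hεI
    rw [← hC₁] at h1
    have h2 : ε ≤ (-(g S I))/(2*C₁) := by rw [hεdef]; exact min_le_right _ _
    have h3 : C₁ * ε ≤ (-(g S I))/2 := by
      have := mul_le_mul_of_nonneg_left h2 hC₁0.le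
      calc C₁ * ε ≤ C₁ * ((-(g S I))/(2*C₁)) := this
        _ = (-(g S I))/2 := by field_simp [hC₁0.ne']
    linarith
  -- Key claim B: g I S ≤ 0
  have keyB : g I S ≤ 0 := by
    have main : ∀ ε : ℝ, 0 < ε → ε ≤ I/2 →
        g I S ≤ (2*(c+4*D)/I + 2*Lr) * ε := by
      intro ε hε hεI
      set δ : ℝ := min ε (ε^2/(8*K)) with hδdef
      have hδ0 : 0 < δ := lt_min hε (div_pos (pow_pos hε 2) (by linarith))
      have hδε : δ ≤ ε := min_le_left _ _
      have hδK : δ ≤ ε^2/(8*K) := min_le_right _ _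
      have ev1 : ∀ᶠ t in atTop, φ t < S + δ :=
        eventually_lt_of_limsup_lt (by rw [← hSdef]; linarith) hub
      have ev2 : ∀ᶠ t in atTop, I - δ < φ t :=
        eventually_lt_of_lt_liminf (by rw [← hIdef]; linarith) hlbd
      obtain ⟨T₁, hT₁⟩ := eventually_atTop.1 (ev1.and ev2)
      set h : ℝ := ε/(2*K) with hhdef
      have hh0 : 0 < h := div_pos hε (by linarith)
      have freq : ∃ᶠ t in atTop, φ t < I + δ :=
        frequently_lt_of_liminf_lt hub.isCoboundedUnder_ge (by rw [← hIdef]; linarith)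
      obtain ⟨t, htφ, htT⟩ := (freq.and_eventually (eventually_ge_atTop (T₁ + 1 + h + c*τ))).exists
      have ht1 : T₁ ≤ t - 1 := by linarith
      have ht1' : T₁ ≤ t + 1 := by linarith
      have htc : T₁ ≤ t - c*τ := by linarith
      have hth : T₁ ≤ t - h := by linarith
      have htt : T₁ ≤ t := by linarith
      -- derivative upper bound at t
      have hder : deriv φ t ≤ ε := by
        by_contra hcon
        push_neg at hcon
        have hbound : ∀ u ∈ Set.Icc (t-h) t, ε/2 ≤ deriv φ u := by
          intro u hu
          have h1 := hψLip u t
          have hut : |u - t| ≤ h := by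
            rw [abs_le]; exact ⟨by linarith [hu.1], by linarith [hu.2]⟩
          have h2 : |deriv φ u - deriv φ t| ≤ K * h :=
            le_trans h1 (mul_le_mul_of_nonneg_left hut hK0.le)
          have hKh : K * h = ε/2 := by rw [hhdef]; field_simp [hK0.ne']
          rw [hKh, abs_le] at h2
          linarith [h2.1]
        have hgro := growLem φ hd (show t - h ≤ t by linarith) hbound
        have hεh : ε/2 * (t - (t - h)) = ε^2/(4*K) := by
          rw [hhdef]; field_simp [hK0.ne']; ring
        rw [hεh] at hgro
        have h2δ : 2*δ ≤ ε^2/(4*K) := by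
          have : ε^2/(4*K) = 2*(ε^2/(8*K)) := by ring
          linarith
        have hcontr := (hT₁ (t-h) hth).2
        linarith
      -- estimates at t
      have heq := hwave t
      have hφt_ub : φ t < I + ε := by linarith
      have hφt_lb : I - ε < φ t := lt_of_le_of_lt (by linarith) (hT₁ t htt).2
      have hn1 : I - ε < φ (t+1) := lt_of_le_of_lt (by linarith) (hT₁ (t+1) ht1').2
      have hn2 : I - ε < φ (t-1) := lt_of_le_of_lt (by linarith) (hT₁ (t-1) ht1).2
      have hq_ub : φ (t - c*τ) < S + ε := lt_of_lt_of_le (hT₁ (t - c*τ) htc).1 (by linarith)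
      have hprod : φ t * g (φ t) (φ (t - c*τ)) ≤ (c + 4*D) * ε := by
        have hsum : -(4*ε) ≤ φ (t+1) + φ (t-1) - 2*φ t := by
          linarith only [hn1, hn2, hφt_ub]
        have hDpart : D * (-(4*ε)) ≤ D * (φ (t+1) + φ (t-1) - 2*φ t) :=
          mul_le_mul_of_nonneg_left hsum hD.le
        have hcder : c * deriv φ t ≤ c * ε :=
          mul_le_mul_of_nonneg_left hder hc0.le
        linarith only [heq, hDpart, hcder]
      have hgq : g (φ t) (φ (t - c*τ)) ≤ 2*(c+4*D)/I * ε := by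
        set Gq := g (φ t) (φ (t - c*τ)) with hGq
        rcases le_or_gt Gq 0 with h0 | h0
        · have : 0 ≤ 2*(c+4*D)/I * ε :=
            mul_nonneg (div_nonneg (by linarith) hI0.le) hε.le
          linarith
        · have hφhalf : I/2 ≤ φ t := by linarith only [hφt_lb, hεI]
          have hmul : (I/2) * Gq ≤ φ t * Gq := by
            have hfact : 0 ≤ (φ t - I/2) * Gq :=
              mul_nonneg (by linarith only [hφhalf]) h0.le
            linarith only [hfact]
          have key2 : I/2 * Gq ≤ (c+4*D)*ε := le_trans hmul hprod
          have hrw : 2*(c+4*D)/I * ε = ((c+4*D)*ε)/(I/2) := by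
            field_simp [hI0.ne']
          rw [hrw, le_div_iff₀ (by linarith only [hI0] : (0:ℝ) < I/2)]
          linarith only [key2]
      have hstep1 : g (φ t) S ≤ g (φ t) (φ (t - c*τ)) + Lr*ε := by
        have hLε : 0 ≤ Lr*ε := mul_nonneg hLr0 hε.le
        rcases le_or_gt (φ (t - c*τ)) S with hle | hlt
        · rcases eq_or_lt_of_le hle with heqS | hltS
          · rw [heqS]; linarith
          · have hanti := hA2 (φ t) (hφmem t) (hφmem (t - c*τ)) hSmem hltS
            simp only at hanti
            linarith
        · have hd1 : |S - φ (t - c*τ)| ≤ ε := by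
            rw [abs_le]
            refine ⟨by linarith, by linarith [hφ0 (t - c*τ)]⟩
          have hpp := hgpair (φ t) S (φ t) (φ (t - c*τ))
          have hmax : max |φ t - φ t| |S - φ (t - c*τ)| ≤ ε := by
            simp only [sub_self, abs_zero]
            exact max_le hε.le hd1
          have h2 : |g (φ t) S - g (φ t) (φ (t - c*τ))| ≤ Lr * ε :=
            le_trans hpp (mul_le_mul_of_nonneg_left hmax hLr0)
          have := abs_le.1 h2
          linarith [this.2]
      have hstep2 : g I S ≤ g (φ t) S + Lr*ε := by
        have hd2 : |I - φ t| ≤ ε := by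
          rw [abs_le]; exact ⟨by linarith, by linarith⟩
        have hpp := hgpair I S (φ t) S
        have hmax : max |I - φ t| |S - S| ≤ ε := by
          simp only [sub_self, abs_zero]
          exact max_le hd2 hε.le
        have h2 : |g I S - g (φ t) S| ≤ Lr * ε :=
          le_trans hpp (mul_le_mul_of_nonneg_left hmax hLr0)
        have := abs_le.1 h2
        linarith [this.2]
      have hdistr : (2*(c+4*D)/I + 2*Lr) * ε = 2*(c+4*D)/I*ε + 2*(Lr*ε) := by ring
      rw [hdistr]
      linarith
    by_contra hneg
    push_neg at hneg
    obtain ⟨C₂, hC₂⟩ : ∃ x : ℝ, x = 2*(c+4*D)/I + 2*Lr := ⟨_, rfl⟩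
    have hC₂0 : 0 < C₂ := by
      have h0 : 0 < 2*(c+4*D)/I := div_pos (by linarith) hI0
      rw [hC₂]; linarith
    obtain ⟨ε, hεdef⟩ : ∃ x : ℝ, x = min (I/2) ((g I S)/(2*C₂)) := ⟨_, rfl⟩
    have hε0 : 0 < ε := by
      rw [hεdef]; exact lt_min (by linarith) (div_pos hneg (by linarith))
    have h1 := main ε hε0 (by rw [hεdef]; exact min_le_left _ _)
    rw [← hC₂] at h1
    have h2 : ε ≤ (g I S)/(2*C₂) := by rw [hεdef]; exact min_le_right _ _
    have h3 : C₂ * ε ≤ (g I S)/2 := by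
      have := mul_le_mul_of_nonneg_left h2 hC₂0.le
      calc C₂ * ε ≤ C₂ * ((g I S)/(2*C₂)) := this
        _ = (g I S)/2 := by field_simp [hC₂0.ne']
    linarith
  -- S < 1
  have hSlt1 : S < 1 := by
    rcases lt_or_eq_of_le hS1' with hlt | heq
    · exact hlt
    · exfalso
      have h11 : (1:ℝ) ∈ Set.Icc (0:ℝ) 1 := ⟨zero_le_one, le_rfl⟩
      have h01 : (0:ℝ) ∈ Set.Icc (0:ℝ) 1 := ⟨le_rfl, zero_le_one⟩
      have hanti := hA2 1 h11 h01 hImem hI0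
      simp only at hanti
      rw [hg10] at hanti
      rw [heq] at keyA
      linarith
  obtain ⟨hIE, hSE⟩ := hH4 S I hSlt1 hIS hI0 keyB keyA
  refine tendsto_of_liminf_eq_limsup ?_ ?_ hub hlbd
  · rw [← hIdef]; exact hIE
  · rw [← hSdef]; exact hSE
end
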